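/- Suppose |F| ≥ 4. A 4-element coclique C of the graph Γ_1 is linear or dually linear if and only if C satisfies property (L). -/

import Mathlib

/-- A point-hyperplane anti-flag of `PG(n-1,F)`: a pair `(p, H)` where `p` is a point
(1-dimensional subspace of `F^n`), `H` is a hyperplane ((n-1)-dimensional subspace),
and `p` is not contained in `H`. -/
structure AntiFlag (F : Type*) [Field F] (n : ℕ) where
  pt : Submodule F (Fin n → F)
  hyp : Submodule F (Fin n → F)
  pt_rank : Module.finrank F pt = 1
  hyp_rank : Module.finrank F hyp = n - 1
  not_incident : ¬ pt ≤ hyp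

variable {F : Type*} [Field F] {n : ℕ}

/-- `A ~₁ B` : for some `j`, `p_j ⊆ H_{3-j}` and `p_{3-j} ⊄ H_j`. -/
def adj1 (A B : AntiFlag F n) : Prop :=
  A ≠ B ∧ ((A.pt ≤ B.hyp ∧ ¬ B.pt ≤ A.hyp) ∨ (B.pt ≤ A.hyp ∧ ¬ A.pt ≤ B.hyp))

/-- `A ~₂ B` : `p_1 ⊆ H_2` and `p_2 ⊆ H_1`. -/
def adj2 (A B : AntiFlag F n) : Prop :=
  A ≠ B ∧ A.pt ≤ B.hyp ∧ B.pt ≤ A.hyp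

/-- `A ~₃ B` : `p_1 = p_2` or `H_1 = H_2`. -/
def adj3 (A B : AntiFlag F n) : Prop :=
  A ≠ B ∧ (A.pt = B.pt ∨ A.hyp = B.hyp)

/-- `A ~₄ B` : `p_1 ≠ p_2`, `H_1 ≠ H_2`, `p_1 ⊄ H_2` and `p_2 ⊄ H_1`. -/
def adj4 (A B : AntiFlag F n) : Prop :=
  A ≠ B ∧ A.pt ≠ B.pt ∧ A.hyp ≠ B.hyp ∧ ¬ A.pt ≤ B.hyp ∧ ¬ B.pt ≤ A.hyp

/-- `𝒳^{~ᵢ}` : the set of anti-flags `i`-adjacent to every anti-flag of `𝒳`. -/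
def perpSet (adj : AntiFlag F n → AntiFlag F n → Prop) (X : Set (AntiFlag F n)) :
    Set (AntiFlag F n) := {B | ∀ A ∈ X, adj A B}


/-- A coclique of the graph `Γ₁`: no two distinct members are `1`-adjacent. -/
def IsCoclique1 (C : Set (AntiFlag F n)) : Prop := ∀ A ∈ C, ∀ B ∈ C, ¬ adj1 A B

/-- A linear coclique: all members share a common hyperplane and there is a line
(2-dimensional subspace) containing the point of every member. -/
def IsLinear (C : Set (AntiFlag F n)) : Prop :=
  (∃ H, ∀ A ∈ C, A.hyp = H) ∧
  ∃ L : Submodule F (Fin n → F), Module.finrank F L = 2 ∧ ∀ A ∈ C, A.pt ≤ L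

/-- A dually linear coclique: all members share a common point and there is an
(n-2)-dimensional subspace contained in the hyperplane of every member. -/
def IsDuallyLinear (C : Set (AntiFlag F n)) : Prop :=
  (∃ p, ∀ A ∈ C, A.pt = p) ∧
  ∃ S : Submodule F (Fin n → F), Module.finrank F S = n - 2 ∧ ∀ A ∈ C, S ≤ A.hyp


/-- Property (L): for every anti-flag `A ∉ C`, the set `A^{~₁} ∩ C` is empty,
a singleton, all of `C` with exactly one element removed, or all of `C`. -/
def PropL (C : Set (AntiFlag F n)) : Prop :=
  ∀ A : AntiFlag F n, A ∉ C →
    {B ∈ C | adj1 A B} = ∅ ∨ (∃ B, {B0 ∈ C | adj1 A B0} = {B}) ∨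
    (∃ B ∈ C, {B0 ∈ C | adj1 A B0} = C \ {B}) ∨ {B ∈ C | adj1 A B} = C


/-! ### Auxiliary infrastructure -/

section Aux

open Module Submodule

variable {V : Type*} [AddCommGroup V] [Module F V]

theorem AF_exists_avoid (s : Finset F) (l : List (Submodule F V)) (hlen : l.length ≤ s.card)
    (W : Submodule F V) (h : ∀ u ∈ l, ¬ W ≤ u) : ∃ v ∈ W, ∀ u ∈ l, v ∉ u := by
  classical
  induction l with
  | nil => exact ⟨0, W.zero_mem, by simp⟩
  | cons u t ih =>
    obtain ⟨v, hvW, hvt⟩ := ih (le_trans (Nat.le_succ _) hlen)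
      (fun x hx => h x (List.mem_cons_of_mem _ hx))
    by_cases hvu : v ∈ u
    · obtain ⟨w, hwW, hwu⟩ := SetLike.not_le_iff_exists.mp (h u List.mem_cons_self)
      by_contra hc
      push_neg at hc
      have key : ∀ c : F, ∃ x ∈ t, w + c • v ∈ x := by
        intro c
        obtain ⟨x, hx, hmem⟩ := hc (w + c • v) (W.add_mem hwW (W.smul_mem c hvW))
        rcases List.mem_cons.mp hx with rfl | hx'
        · exact absurd (by simpa using x.sub_mem hmem (x.smul_mem c hvu)) hwu
        · exact ⟨x, hx', hmem⟩
      choose g hg1 hg2 using key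
      have hginj : Function.Injective (fun c : s => (⟨g c, List.mem_toFinset.mpr (hg1 c)⟩ :
          {x // x ∈ t.toFinset})) := by
        intro c1 c2 hs
        simp only [Subtype.mk.injEq] at hs
        by_contra hne
        have hne2 : (c1 : F) ≠ (c2 : F) := fun hh => hne (Subtype.ext hh)
        have h1 := hg2 (c1 : F)
        have h2 := hg2 (c2 : F)
        rw [hs] at h1
        have hsub : ((c1 : F) - c2) • v ∈ g (c2 : F) := by
          have := (g (c2 : F)).sub_mem h1 h2
          simpa [sub_smul, add_sub_add_left_eq_sub] using this
        have hv' : v ∈ g (c2 : F) := by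
          have hne' : (c1 : F) - c2 ≠ 0 := sub_ne_zero_of_ne hne2
          simpa [smul_smul, inv_mul_cancel₀ hne'] using
            (g (c2 : F)).smul_mem ((c1 : F) - c2)⁻¹ hsub
        exact hvt (g (c2 : F)) (hg1 (c2 : F)) hv'
      have hcard := Fintype.card_le_of_injective _ hginj
      simp only [Fintype.card_coe] at hcard
      have h5 : s.card ≤ t.length := hcard.trans (List.toFinset_card_le t)
      have h6 : (u :: t).length ≤ t.length := hlen.trans h5
      simp at h6
    · exact ⟨v, hvW, fun x hx => by
        rcases List.mem_cons.mp hx with rfl | hx'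
        · exact hvu
        · exact hvt x hx'⟩

theorem AF_dual_ann_not_le (P : Submodule F V) (x : V) (h : x ∉ P) :
    ¬ P.dualAnnihilator ≤ LinearMap.ker ((Module.Dual.eval F V) x) := by
  intro hle
  have hx : P.mkQ x ≠ 0 := by simpa [Submodule.Quotient.mk_eq_zero] using h
  obtain ⟨g, hg⟩ : ∃ g : Module.Dual F (V ⧸ P), g (P.mkQ x) ≠ 0 := by
    by_contra hc; push_neg at hc
    exact hx ((Module.forall_dual_apply_eq_zero_iff F _).mp hc)
  have hmem : g.comp P.mkQ ∈ P.dualAnnihilator := by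
    rw [Submodule.mem_dualAnnihilator]
    intro w hw
    simp [(Submodule.Quotient.mk_eq_zero P).mpr hw]
  have := hle hmem
  simp only [LinearMap.mem_ker] at this
  exact hg (by simpa using this)

/-- Existence of a hyperplane containing `P` and avoiding each vector of the list `l`. -/
theorem AF_exists_hyperplane (hn : 3 ≤ n) (s : Finset F) (P : Submodule F (Fin n → F))
    (l : List (Fin n → F)) (hlen : l.length ≤ s.card) (hl : ∀ x ∈ l, x ∉ P) (hne : l ≠ []) :
    ∃ K : Submodule F (Fin n → F), Module.finrank F K = n - 1 ∧ P ≤ K ∧ ∀ x ∈ l, x ∉ K := by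
  obtain ⟨f, hfP, hfl⟩ := AF_exists_avoid s (l.map fun x => LinearMap.ker ((Module.Dual.eval F _) x))
    (by simpa using hlen) P.dualAnnihilator (by
      rintro u hu
      rcases List.mem_map.mp hu with ⟨x, hx, rfl⟩
      exact AF_dual_ann_not_le P x (hl x hx))
  have hfl' : ∀ x ∈ l, f x ≠ 0 := by
    intro x hx hfx
    exact hfl _ (List.mem_map.mpr ⟨x, hx, rfl⟩) (by simpa [LinearMap.mem_ker] using hfx)
  obtain ⟨x0, t0, rfl⟩ := List.exists_cons_of_ne_nil hne
  have hx0 : f x0 ≠ 0 := hfl' x0 List.mem_cons_self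
  have hsurj : Function.Surjective f := by
    intro c
    refine ⟨(c * (f x0)⁻¹) • x0, ?_⟩
    simp [mul_assoc, inv_mul_cancel₀ hx0]
  have hrank := LinearMap.finrank_range_add_finrank_ker f
  rw [LinearMap.range_eq_top.mpr hsurj, finrank_top, Module.finrank_self,
    Module.finrank_fin_fun] at hrank
  refine ⟨LinearMap.ker f, by omega, ?_, ?_⟩
  · intro w hw
    exact LinearMap.mem_ker.mpr ((Submodule.mem_dualAnnihilator f).mp hfP w hw)
  · intro x hx hxK
    exact hfl' x hx (LinearMap.mem_ker.mp hxK)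

/-- A rank-one submodule has a generator. -/
theorem AF_exists_gen (p : Submodule F V) (hp : Module.finrank F p = 1) :
    ∃ v : V, v ≠ 0 ∧ p = Submodule.span F {v} := by
  have hbot : p ≠ ⊥ := by
    intro h
    rw [h] at hp
    simp [finrank_bot] at hp
  obtain ⟨v, hvp, hv0⟩ := Submodule.exists_mem_ne_zero_of_ne_bot hbot
  have hle : Submodule.span F {v} ≤ p := by
    rw [Submodule.span_singleton_le_iff_mem]; exact hvp
  haveI : FiniteDimensional F p := by
    apply FiniteDimensional.of_finrank_eq_succ (n := 0); simpa using hp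
  refine ⟨v, hv0, (Submodule.eq_of_le_of_finrank_le hle ?_).symm⟩
  rw [hp, finrank_span_singleton hv0]

theorem AF_notmem_of_ne (p q : Submodule F V) (hp : Module.finrank F p = 1)
    (hq : Module.finrank F q = 1) (hne : p ≠ q) {v : V} (hv : v ≠ 0)
    (hgen : q = Submodule.span F {v}) : v ∉ p := by
  intro hmem
  haveI : FiniteDimensional F p := by
    apply FiniteDimensional.of_finrank_eq_succ (n := 0); simpa using hp
  have hle : q ≤ p := by
    rw [hgen, Submodule.span_singleton_le_iff_mem]; exact hmem
  exact hne (Submodule.eq_of_le_of_finrank_le hle (by rw [hp, hq])).symm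

end Aux

section Aux2

open Module Submodule

theorem AntiFlag.ext' {A B : AntiFlag F n} (h1 : A.pt = B.pt) (h2 : A.hyp = B.hyp) : A = B := by
  cases A; cases B; simp_all

variable (hn : 3 ≤ n)

/-- finrank of the whole space. -/
theorem AF_finrank_top : Module.finrank F (Fin n → F) = n := Module.finrank_fin_fun F

/-- Two distinct hyperplanes meet in a subspace of codimension 2. -/
theorem AF_inf_hyp_rank {H1 H2 : Submodule F (Fin n → F)} (h1 : Module.finrank F H1 = n - 1)
    (h2 : Module.finrank F H2 = n - 1) (hne : H1 ≠ H2) :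
    Module.finrank F ↥(H1 ⊓ H2) = n - 2 := by
  have hform := Submodule.finrank_sup_add_finrank_inf_eq H1 H2
  have hle : Module.finrank F ↥(H1 ⊔ H2) ≤ n := by
    simpa [Module.finrank_fin_fun] using Submodule.finrank_le (H1 ⊔ H2)
  have hsup : Module.finrank F ↥(H1 ⊔ H2) = n := by
    by_contra hne2
    have hlt : Module.finrank F ↥(H1 ⊔ H2) ≤ n - 1 := by omega
    have e1 : H1 = H1 ⊔ H2 := Submodule.eq_of_le_of_finrank_le le_sup_left (by omega)
    have e2 : H2 = H1 ⊔ H2 := Submodule.eq_of_le_of_finrank_le le_sup_right (by omega)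
    exact hne (e1.trans e2.symm)
  omega

/-- Two distinct points span a line. -/
theorem AF_sup_pt_rank {p1 p2 : Submodule F (Fin n → F)} (h1 : Module.finrank F p1 = 1)
    (h2 : Module.finrank F p2 = 1) (hne : p1 ≠ p2) :
    Module.finrank F ↥(p1 ⊔ p2) = 2 := by
  have hform := Submodule.finrank_sup_add_finrank_inf_eq p1 p2
  have hinfle : Module.finrank F ↥(p1 ⊓ p2) ≤ 1 := by
    rw [← h1]; exact Submodule.finrank_mono inf_le_left
  have hinf : Module.finrank F ↥(p1 ⊓ p2) = 0 := by
    by_contra hne2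
    have e1 : p1 ⊓ p2 = p1 := Submodule.eq_of_le_of_finrank_le inf_le_left (by omega)
    have e2 : p1 ⊓ p2 = p2 := Submodule.eq_of_le_of_finrank_le inf_le_right (by omega)
    exact hne (e1.symm.trans e2)
  omega

/-- A hyperplane is not contained in a submodule of rank `< n - 1` ... general version:
if `finrank W ≤ finrank H` and `H ≤ W` then `H = W`. -/
theorem AF_not_le_hyp {H W : Submodule F (Fin n → F)} (hH : Module.finrank F H = n - 1)
    (hW : Module.finrank F W ≤ n - 1) (hne : H ≠ W) : ¬ H ≤ W := fun hle =>
  hne (Submodule.eq_of_le_of_finrank_le hle (by omega))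

theorem AF_hyp_ne_top' (hn' : 3 ≤ n) {H : Submodule F (Fin n → F)}
    (hH : Module.finrank F H = n - 1) : H ≠ ⊤ := by
  intro h
  rw [h, finrank_top, AF_finrank_top] at hH
  omega

theorem AF_set_ncard_eq_four {α : Type*} {s : Set α} (h : s.ncard = 4) :
    ∃ a b c d : α, a ≠ b ∧ a ≠ c ∧ a ≠ d ∧ b ≠ c ∧ b ≠ d ∧ c ≠ d ∧ s = {a, b, c, d} := by
  have hfin : s.Finite := by
    by_contra hinf
    rw [Set.Infinite.ncard hinf] at h
    omega
  obtain ⟨a, ha⟩ := Set.nonempty_of_ncard_ne_zero (show s.ncard ≠ 0 by omega)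
  have h3 : (s \ {a}).ncard = 3 := by
    have := Set.ncard_diff_singleton_add_one ha hfin
    omega
  obtain ⟨b, c, d, hbc, hbd, hcd, heq⟩ := Set.ncard_eq_three.mp h3
  have hb : b ∈ s \ {a} := by rw [heq]; simp
  have hc : c ∈ s \ {a} := by rw [heq]; simp
  have hd : d ∈ s \ {a} := by rw [heq]; simp
  refine ⟨a, b, c, d, ?_, ?_, ?_, hbc, hbd, hcd, ?_⟩
  · exact fun hab => hb.2 (by simp [← hab])
  · exact fun hac => hc.2 (by simp [← hac])
  · exact fun had => hd.2 (by simp [← had])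
  · show s = insert a {b, c, d}
    rw [← heq, Set.insert_diff_singleton, Set.insert_eq_self.mpr ha]

end Aux2

section Master

open Module Submodule

variable {C : Set (AntiFlag F n)} {A1 A2 A3 A4 : AntiFlag F n}

theorem AF_not_propL_of (hC : IsCoclique1 C) (hset : C = {A1, A2, A3, A4})
    (d12 : A1 ≠ A2) (d13 : A1 ≠ A3) (d14 : A1 ≠ A4) (d23 : A2 ≠ A3) (d24 : A2 ≠ A4)
    (d34 : A3 ≠ A4) (X : AntiFlag F n) (h1 : adj1 X A1) (h2 : adj1 X A2)
    (h3 : ¬ adj1 X A3) (h4 : ¬ adj1 X A4) : ¬ PropL C := by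
  have m1 : A1 ∈ C := by rw [hset]; simp
  have m2 : A2 ∈ C := by rw [hset]; simp
  have m3 : A3 ∈ C := by rw [hset]; simp
  have m4 : A4 ∈ C := by rw [hset]; simp
  have hX : X ∉ C := by
    intro hmem
    rcases (by rw [hset] at hmem; simpa using hmem :
        X = A1 ∨ X = A2 ∨ X = A3 ∨ X = A4) with rfl | rfl | rfl | rfl
    · exact h1.1 rfl
    · exact h2.1 rfl
    · exact hC X hmem A1 m1 h1
    · exact hC X hmem A1 m1 h1
  have hD : {B ∈ C | adj1 X B} = {A1, A2} := by
    ext B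
    constructor
    · rintro ⟨hBC, hBadj⟩
      rcases (by rw [hset] at hBC; simpa using hBC :
          B = A1 ∨ B = A2 ∨ B = A3 ∨ B = A4) with rfl | rfl | rfl | rfl
      · exact Set.mem_insert _ _
      · exact Set.mem_insert_of_mem _ rfl
      · exact absurd hBadj h3
      · exact absurd hBadj h4
    · rintro hB
      rcases (by simpa using hB : B = A1 ∨ B = A2) with rfl | rfl
      · exact ⟨m1, h1⟩
      · exact ⟨m2, h2⟩
  intro hPropL
  rcases hPropL X hX with hempty | ⟨B, hB⟩ | ⟨B, hBC, hB⟩ | hall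
  · have : A1 ∈ ({B ∈ C | adj1 X B} : Set _) := ⟨m1, h1⟩
    rw [hempty] at this
    exact this
  · have e1 : A1 = B := by
      have : A1 ∈ ({B0 ∈ C | adj1 X B0} : Set _) := ⟨m1, h1⟩
      rwa [hB, Set.mem_singleton_iff] at this
    have e2 : A2 = B := by
      have : A2 ∈ ({B0 ∈ C | adj1 X B0} : Set _) := ⟨m2, h2⟩
      rwa [hB, Set.mem_singleton_iff] at this
    exact d12 (e1.trans e2.symm)
  · rw [hD] at hB
    rcases ne_or_eq B A3 with hne | heq
    · have : A3 ∈ C \ {B} := ⟨m3, by simpa using hne.symm⟩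
      rw [← hB] at this
      rcases (by simpa using this : A3 = A1 ∨ A3 = A2) with e | e
      · exact d13 e.symm
      · exact d23 e.symm
    · have : A4 ∈ C \ {B} := ⟨m4, by simp only [Set.mem_singleton_iff, heq]; exact d34.symm⟩
      rw [← hB] at this
      rcases (by simpa using this : A4 = A1 ∨ A4 = A2) with e | e
      · exact d14 e.symm
      · exact d24 e.symm
  · rw [hD] at hall
    have : A3 ∈ ({A1, A2} : Set _) := hall.symm ▸ m3
    rcases (by simpa using this : A3 = A1 ∨ A3 = A2) with e | e
    · exact d13 e.symm
    · exact d23 e.symm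

/-- Build an anti-flag witness from a vector `q` and a hyperplane `K` with `q ∉ K`,
such that it is `1`-adjacent to exactly the members on which the "xor" conditions hold. -/
theorem AF_not_propL_mk (hn : 3 ≤ n) (hC : IsCoclique1 C) (hset : C = {A1, A2, A3, A4})
    (d12 : A1 ≠ A2) (d13 : A1 ≠ A3) (d14 : A1 ≠ A4) (d23 : A2 ≠ A3) (d24 : A2 ≠ A4)
    (d34 : A3 ≠ A4) (q : Fin n → F) (K : Submodule F (Fin n → F))
    (hK : Module.finrank F K = n - 1) (hqK : q ∉ K)
    (e1 : (q ∈ A1.hyp ∧ ¬ A1.pt ≤ K) ∨ (A1.pt ≤ K ∧ q ∉ A1.hyp))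
    (e2 : (q ∈ A2.hyp ∧ ¬ A2.pt ≤ K) ∨ (A2.pt ≤ K ∧ q ∉ A2.hyp))
    (e3 : (q ∈ A3.hyp ∧ A3.pt ≤ K) ∨ (q ∉ A3.hyp ∧ ¬ A3.pt ≤ K))
    (e4 : (q ∈ A4.hyp ∧ A4.pt ≤ K) ∨ (q ∉ A4.hyp ∧ ¬ A4.pt ≤ K)) : ¬ PropL C := by
  have hq0 : q ≠ 0 := fun h => hqK (h ▸ K.zero_mem)
  set X : AntiFlag F n := ⟨Submodule.span F {q}, K, finrank_span_singleton hq0, hK,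
    fun h => hqK ((Submodule.span_singleton_le_iff_mem q K).mp h)⟩ with hXdef
  have hXpt : ∀ (W : Submodule F (Fin n → F)), X.pt ≤ W ↔ q ∈ W := by
    intro W
    exact Submodule.span_singleton_le_iff_mem q W
  have hadj : ∀ B : AntiFlag F n,
      adj1 X B ↔ ((q ∈ B.hyp ∧ ¬ B.pt ≤ K) ∨ (B.pt ≤ K ∧ q ∉ B.hyp)) := by
    intro B
    constructor
    · rintro ⟨hne, h | h⟩
      · exact Or.inl ⟨(hXpt B.hyp).mp h.1, h.2⟩
      · exact Or.inr ⟨h.1, fun hq => h.2 ((hXpt B.hyp).mpr hq)⟩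
    · rintro (⟨hqB, hBK⟩ | ⟨hBK, hqB⟩)
      · refine ⟨?_, Or.inl ⟨(hXpt B.hyp).mpr hqB, hBK⟩⟩
        intro h
        rw [← h] at hqB
        exact hqK hqB
      · refine ⟨?_, Or.inr ⟨hBK, fun hq => hqB ((hXpt B.hyp).mp hq)⟩⟩
        intro h
        rw [← h] at hBK
        exact B.not_incident (h ▸ hBK)
  refine AF_not_propL_of hC hset d12 d13 d14 d23 d24 d34 X ((hadj A1).mpr e1)
    ((hadj A2).mpr e2) ?_ ?_
  · rw [hadj A3]; rintro (⟨h1, h2⟩ | ⟨h1, h2⟩) <;> tauto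
  · rw [hadj A4]; rintro (⟨h1, h2⟩ | ⟨h1, h2⟩) <;> tauto

end Master

section Forward

open Module Submodule

theorem AF_propL_of_linear {C : Set (AntiFlag F n)} (hn : 3 ≤ n) (hlin : IsLinear C) :
    PropL C := by
  obtain ⟨⟨H, hH⟩, L, hL2, hLpt⟩ := hlin
  intro A hA
  by_cases hAH : A.pt ≤ H
  · -- adjacency to B ∈ C ↔ ¬ B.pt ≤ A.hyp
    have hadj : ∀ B ∈ C, (adj1 A B ↔ ¬ B.pt ≤ A.hyp) := by
      intro B hB
      constructor
      · rintro ⟨hne, h | h⟩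
        · exact h.2
        · exact absurd (hH B hB ▸ hAH) h.2
      · intro h
        exact ⟨fun he => hA (he ▸ hB), Or.inl ⟨hH B hB ▸ hAH, h⟩⟩
    by_cases hLA : L ≤ A.hyp
    · left
      ext B
      simp only [Set.mem_setOf_eq, Set.mem_empty_iff_false, iff_false, not_and]
      intro hB hadj'
      exact ((hadj B hB).mp hadj') (le_trans (hLpt B hB) hLA)
    · -- (L ⊓ A.hyp) := L ⊓ A.hyp is a point
      have hrank : Module.finrank F ↥(L ⊓ A.hyp) = 1 := by
        have hform := Submodule.finrank_sup_add_finrank_inf_eq L A.hyp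
        have hsle : Module.finrank F ↥(L ⊔ A.hyp) ≤ n := by
          simpa [Module.finrank_fin_fun] using Submodule.finrank_le (L ⊔ A.hyp)
        have hMle : Module.finrank F ↥(L ⊓ A.hyp) ≤ 2 := by
          rw [← hL2]; exact Submodule.finrank_mono inf_le_left
        have hab := A.hyp_rank
        have hne2 : Module.finrank F ↥(L ⊓ A.hyp) ≠ 2 := by
          intro h2
          have heqL : L ⊓ A.hyp = L :=
            Submodule.eq_of_le_of_finrank_le (inf_le_left : L ⊓ A.hyp ≤ L) (by omega)
          exact hLA (heqL ▸ (inf_le_right : L ⊓ A.hyp ≤ A.hyp))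
        omega
      have hmem_iff : ∀ B ∈ C, (B.pt ≤ A.hyp ↔ B.pt = (L ⊓ A.hyp)) := by
        intro B hB
        constructor
        · intro h
          have hle : B.pt ≤ (L ⊓ A.hyp) := le_inf (hLpt B hB) h
          exact (Submodule.eq_of_le_of_finrank_le hle (by rw [B.pt_rank, hrank])).symm ▸ rfl
        · intro h
          rw [h]
          exact inf_le_right
      by_cases hex : ∃ B0 ∈ C, B0.pt = (L ⊓ A.hyp)
      · obtain ⟨B0, hB0C, hB0⟩ := hex
        right; right; left
        refine ⟨B0, hB0C, ?_⟩
        ext B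
        simp only [Set.mem_setOf_eq, Set.mem_diff, Set.mem_singleton_iff]
        constructor
        · rintro ⟨hBC, hBadj⟩
          refine ⟨hBC, fun he => ?_⟩
          exact ((hadj B hBC).mp hBadj) ((hmem_iff B hBC).mpr (he ▸ hB0))
        · rintro ⟨hBC, hne⟩
          refine ⟨hBC, (hadj B hBC).mpr fun h => hne ?_⟩
          have : B.pt = B0.pt := ((hmem_iff B hBC).mp h).trans hB0.symm
          exact AntiFlag.ext' this ((hH B hBC).trans (hH B0 hB0C).symm)
      · right; right; right
        ext B
        simp only [Set.mem_setOf_eq]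
        constructor
        · exact fun h => h.1
        · intro hBC
          refine ⟨hBC, (hadj B hBC).mpr fun h => ?_⟩
          exact hex ⟨B, hBC, (hmem_iff B hBC).mp h⟩
  · -- adjacency to B ∈ C ↔ B.pt ≤ A.hyp
    have hadj : ∀ B ∈ C, (adj1 A B ↔ B.pt ≤ A.hyp) := by
      intro B hB
      constructor
      · rintro ⟨hne, h | h⟩
        · exact absurd (hH B hB ▸ h.1) hAH
        · exact h.1
      · intro h
        exact ⟨fun he => hA (he ▸ hB), Or.inr ⟨h, fun hle => hAH (hH B hB ▸ hle)⟩⟩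
    by_cases hLA : L ≤ A.hyp
    · right; right; right
      ext B
      simp only [Set.mem_setOf_eq]
      exact ⟨fun h => h.1, fun hBC => ⟨hBC, (hadj B hBC).mpr (le_trans (hLpt B hBC) hLA)⟩⟩
    · have hrank : Module.finrank F ↥(L ⊓ A.hyp) = 1 := by
        have hform := Submodule.finrank_sup_add_finrank_inf_eq L A.hyp
        have hsle : Module.finrank F ↥(L ⊔ A.hyp) ≤ n := by
          simpa [Module.finrank_fin_fun] using Submodule.finrank_le (L ⊔ A.hyp)
        have hMle : Module.finrank F ↥(L ⊓ A.hyp) ≤ 2 := by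
          rw [← hL2]; exact Submodule.finrank_mono inf_le_left
        have hab := A.hyp_rank
        have hne2 : Module.finrank F ↥(L ⊓ A.hyp) ≠ 2 := by
          intro h2
          have heqL : L ⊓ A.hyp = L :=
            Submodule.eq_of_le_of_finrank_le (inf_le_left : L ⊓ A.hyp ≤ L) (by omega)
          exact hLA (heqL ▸ (inf_le_right : L ⊓ A.hyp ≤ A.hyp))
        omega
      have hmem_iff : ∀ B ∈ C, (B.pt ≤ A.hyp ↔ B.pt = (L ⊓ A.hyp)) := by
        intro B hB
        constructor
        · intro h
          have hle : B.pt ≤ (L ⊓ A.hyp) := le_inf (hLpt B hB) h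
          exact (Submodule.eq_of_le_of_finrank_le hle (by rw [B.pt_rank, hrank])).symm ▸ rfl
        · intro h
          rw [h]
          exact inf_le_right
      by_cases hex : ∃ B0 ∈ C, B0.pt = (L ⊓ A.hyp)
      · obtain ⟨B0, hB0C, hB0⟩ := hex
        right; left
        refine ⟨B0, ?_⟩
        ext B
        simp only [Set.mem_setOf_eq, Set.mem_singleton_iff]
        constructor
        · rintro ⟨hBC, hBadj⟩
          have : B.pt = B0.pt := (((hmem_iff B hBC).mp ((hadj B hBC).mp hBadj))).trans hB0.symm
          exact AntiFlag.ext' this ((hH B hBC).trans (hH B0 hB0C).symm)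
        · rintro rfl
          exact ⟨hB0C, (hadj B hB0C).mpr ((hmem_iff B hB0C).mpr hB0)⟩
      · left
        ext B
        simp only [Set.mem_setOf_eq, Set.mem_empty_iff_false, iff_false, not_and]
        intro hBC hBadj
        exact hex ⟨B, hBC, (hmem_iff B hBC).mp ((hadj B hBC).mp hBadj)⟩

theorem AF_propL_of_dually_linear {C : Set (AntiFlag F n)} (hn : 3 ≤ n)
    (hdlin : IsDuallyLinear C) : PropL C := by
  obtain ⟨⟨p, hp⟩, S, hS2, hSle⟩ := hdlin
  intro A hA
  by_cases hpA : p ≤ A.hyp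
  · -- adjacency to B ∈ C ↔ ¬ A.pt ≤ B.hyp
    have hadj : ∀ B ∈ C, (adj1 A B ↔ ¬ A.pt ≤ B.hyp) := by
      intro B hB
      constructor
      · rintro ⟨hne, h | h⟩
        · exact absurd (hp B hB ▸ hpA) h.2
        · exact h.2
      · intro h
        exact ⟨fun he => hA (he ▸ hB), Or.inr ⟨hp B hB ▸ hpA, h⟩⟩
    by_cases hAS : A.pt ≤ S
    · left
      ext B
      simp only [Set.mem_setOf_eq, Set.mem_empty_iff_false, iff_false, not_and]
      intro hB hadj'
      exact ((hadj B hB).mp hadj') (le_trans hAS (hSle B hB))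

    · have hrank : Module.finrank F ↥(S ⊔ A.pt) = n - 1 := by
        have hform := Submodule.finrank_sup_add_finrank_inf_eq S A.pt
        have hIle : Module.finrank F ↥(S ⊓ A.pt) ≤ 1 := by
          rw [← A.pt_rank]; exact Submodule.finrank_mono inf_le_right
        have hI0 : Module.finrank F ↥(S ⊓ A.pt) = 0 := by
          by_contra hne0
          have heqp : S ⊓ A.pt = A.pt := Submodule.eq_of_le_of_finrank_le
            (inf_le_right : S ⊓ A.pt ≤ A.pt) (by rw [A.pt_rank]; omega)
          exact hAS (heqp ▸ (inf_le_left : S ⊓ A.pt ≤ S))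
        have hpt := A.pt_rank
        omega
      have hmem_iff : ∀ B ∈ C, (A.pt ≤ B.hyp ↔ B.hyp = (S ⊔ A.pt)) := by
        intro B hB
        constructor
        · intro h
          have hle : (S ⊔ A.pt) ≤ B.hyp := sup_le (hSle B hB) h
          exact (Submodule.eq_of_le_of_finrank_le hle (by rw [B.hyp_rank, hrank])).symm
        · intro h
          rw [h]
          exact le_sup_right
      by_cases hex : ∃ B0 ∈ C, B0.hyp = (S ⊔ A.pt)
      · obtain ⟨B0, hB0C, hB0⟩ := hex
        right; right; left
        refine ⟨B0, hB0C, ?_⟩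
        ext B
        simp only [Set.mem_setOf_eq, Set.mem_diff, Set.mem_singleton_iff]
        constructor
        · rintro ⟨hBC, hBadj⟩
          refine ⟨hBC, fun he => ?_⟩
          exact ((hadj B hBC).mp hBadj) ((hmem_iff B hBC).mpr (he ▸ hB0))
        · rintro ⟨hBC, hne⟩
          refine ⟨hBC, (hadj B hBC).mpr fun h => hne ?_⟩
          have : B.hyp = B0.hyp := ((hmem_iff B hBC).mp h).trans hB0.symm
          exact AntiFlag.ext' ((hp B hBC).trans (hp B0 hB0C).symm) this
      · right; right; right
        ext B
        simp only [Set.mem_setOf_eq]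
        constructor
        · exact fun h => h.1
        · intro hBC
          refine ⟨hBC, (hadj B hBC).mpr fun h => ?_⟩
          exact hex ⟨B, hBC, (hmem_iff B hBC).mp h⟩
  · have hadj : ∀ B ∈ C, (adj1 A B ↔ A.pt ≤ B.hyp) := by
      intro B hB
      constructor
      · rintro ⟨hne, h | h⟩
        · exact h.1
        · exact absurd (hp B hB ▸ h.1) hpA
      · intro h
        exact ⟨fun he => hA (he ▸ hB), Or.inl ⟨h, fun hle => hpA (hp B hB ▸ hle)⟩⟩
    by_cases hAS : A.pt ≤ S
    · right; right; right
      ext B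
      simp only [Set.mem_setOf_eq]
      exact ⟨fun h => h.1, fun hBC => ⟨hBC, (hadj B hBC).mpr (le_trans hAS (hSle B hBC))⟩⟩

    · have hrank : Module.finrank F ↥(S ⊔ A.pt) = n - 1 := by
        have hform := Submodule.finrank_sup_add_finrank_inf_eq S A.pt
        have hIle : Module.finrank F ↥(S ⊓ A.pt) ≤ 1 := by
          rw [← A.pt_rank]; exact Submodule.finrank_mono inf_le_right
        have hI0 : Module.finrank F ↥(S ⊓ A.pt) = 0 := by
          by_contra hne0
          have heqp : S ⊓ A.pt = A.pt := Submodule.eq_of_le_of_finrank_le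
            (inf_le_right : S ⊓ A.pt ≤ A.pt) (by rw [A.pt_rank]; omega)
          exact hAS (heqp ▸ (inf_le_left : S ⊓ A.pt ≤ S))
        have hpt := A.pt_rank
        omega
      have hmem_iff : ∀ B ∈ C, (A.pt ≤ B.hyp ↔ B.hyp = (S ⊔ A.pt)) := by
        intro B hB
        constructor
        · intro h
          have hle : (S ⊔ A.pt) ≤ B.hyp := sup_le (hSle B hB) h
          exact (Submodule.eq_of_le_of_finrank_le hle (by rw [B.hyp_rank, hrank])).symm
        · intro h
          rw [h]
          exact le_sup_right
      by_cases hex : ∃ B0 ∈ C, B0.hyp = (S ⊔ A.pt)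
      · obtain ⟨B0, hB0C, hB0⟩ := hex
        right; left
        refine ⟨B0, ?_⟩
        ext B
        simp only [Set.mem_setOf_eq, Set.mem_singleton_iff]
        constructor
        · rintro ⟨hBC, hBadj⟩
          have : B.hyp = B0.hyp := ((hmem_iff B hBC).mp ((hadj B hBC).mp hBadj)).trans hB0.symm
          exact AntiFlag.ext' ((hp B hBC).trans (hp B0 hB0C).symm) this
        · rintro rfl
          exact ⟨hB0C, (hadj B hB0C).mpr ((hmem_iff B hB0C).mpr hB0)⟩
      · left
        ext B
        simp only [Set.mem_setOf_eq, Set.mem_empty_iff_false, iff_false, not_and]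
        intro hBC hBadj
        exact hex ⟨B, hBC, (hmem_iff B hBC).mp ((hadj B hBC).mp hBadj)⟩

end Forward

section Constructions

open Module Submodule

variable {C : Set (AntiFlag F n)} {A1 A2 A3 A4 : AntiFlag F n}

theorem AF_pt_not_le {A : AntiFlag F n} {v : Fin n → F} (hgen : A.pt = Submodule.span F {v})
    {K : Submodule F (Fin n → F)} (hvK : v ∉ K) : ¬ A.pt ≤ K :=
  fun hle => hvK (hle (by rw [hgen]; exact Submodule.mem_span_singleton_self v))

theorem AF_pt_le {A : AntiFlag F n} {v : Fin n → F} (hgen : A.pt = Submodule.span F {v})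
    {K : Submodule F (Fin n → F)} (hvK : v ∈ K) : A.pt ≤ K := by
  rw [hgen, Submodule.span_singleton_le_iff_mem]; exact hvK

/-- Case Γ1: `A1` has a point different from all other points and `A2` has a hyperplane
different from all other hyperplanes. -/
theorem AF_gamma1 (hn : 3 ≤ n) (hF : 4 ≤ Cardinal.mk F) (hC : IsCoclique1 C)
    (hset : C = {A1, A2, A3, A4})
    (d12 : A1 ≠ A2) (d13 : A1 ≠ A3) (d14 : A1 ≠ A4) (d23 : A2 ≠ A3) (d24 : A2 ≠ A4)
    (d34 : A3 ≠ A4)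
    (hp2 : A1.pt ≠ A2.pt) (hp3 : A1.pt ≠ A3.pt) (hp4 : A1.pt ≠ A4.pt)
    (hH1 : A2.hyp ≠ A1.hyp) (hH3 : A2.hyp ≠ A3.hyp) (hH4 : A2.hyp ≠ A4.hyp) : ¬ PropL C := by
  obtain ⟨s, hs⟩ := Cardinal.exists_finset_le_card F 4 (by exact_mod_cast hF)
  obtain ⟨v2, hv2, hgen2⟩ := AF_exists_gen A2.pt A2.pt_rank
  obtain ⟨v3, hv3, hgen3⟩ := AF_exists_gen A3.pt A3.pt_rank
  obtain ⟨v4, hv4, hgen4⟩ := AF_exists_gen A4.pt A4.pt_rank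
  obtain ⟨q, hqH2, hqav⟩ := AF_exists_avoid s [A1.hyp, A3.hyp, A4.hyp, A1.pt]
    (by simpa using hs) A2.hyp (by
      intro u hu
      have h1le : Module.finrank F A1.hyp ≤ n - 1 := by rw [A1.hyp_rank]
      have h3le : Module.finrank F A3.hyp ≤ n - 1 := by rw [A3.hyp_rank]
      have h4le : Module.finrank F A4.hyp ≤ n - 1 := by rw [A4.hyp_rank]
      have hple : Module.finrank F A1.pt ≤ n - 1 := by rw [A1.pt_rank]; omega
      simp only [List.mem_cons, List.not_mem_nil, or_false] at hu
      rcases hu with rfl | rfl | rfl | rfl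
      · exact AF_not_le_hyp A2.hyp_rank h1le hH1
      · exact AF_not_le_hyp A2.hyp_rank h3le hH3
      · exact AF_not_le_hyp A2.hyp_rank h4le hH4
      · exact AF_not_le_hyp A2.hyp_rank hple (by
          intro he
          have := A1.pt_rank
          rw [← he, A2.hyp_rank] at this
          omega))
  have hq1 : q ∉ A1.hyp := hqav _ (by simp)
  have hq3 : q ∉ A3.hyp := hqav _ (by simp)
  have hq4 : q ∉ A4.hyp := hqav _ (by simp)
  have hqp1 : q ∉ A1.pt := hqav _ (by simp)
  obtain ⟨K, hK, hPK, hKav⟩ := AF_exists_hyperplane hn s A1.pt [v2, v3, v4, q]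
    (by simpa using hs) (by
      intro x hx
      simp only [List.mem_cons, List.not_mem_nil, or_false] at hx
      rcases hx with rfl | rfl | rfl | rfl
      · exact AF_notmem_of_ne A1.pt A2.pt A1.pt_rank A2.pt_rank hp2 hv2 hgen2
      · exact AF_notmem_of_ne A1.pt A3.pt A1.pt_rank A3.pt_rank hp3 hv3 hgen3
      · exact AF_notmem_of_ne A1.pt A4.pt A1.pt_rank A4.pt_rank hp4 hv4 hgen4
      · exact hqp1) (by simp)
  have hv2K : v2 ∉ K := hKav _ (by simp)
  have hv3K : v3 ∉ K := hKav _ (by simp)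
  have hv4K : v4 ∉ K := hKav _ (by simp)
  have hqK : q ∉ K := hKav _ (by simp)
  exact AF_not_propL_mk hn hC hset d12 d13 d14 d23 d24 d34 q K hK hqK
    (Or.inr ⟨hPK, hq1⟩)
    (Or.inl ⟨hqH2, AF_pt_not_le hgen2 hv2K⟩)
    (Or.inr ⟨hq3, AF_pt_not_le hgen3 hv3K⟩)
    (Or.inr ⟨hq4, AF_pt_not_le hgen4 hv4K⟩)

end Constructions

section Lines

open Module Submodule

theorem AF_lineA (hn : 3 ≤ n) {p q r : Submodule F (Fin n → F)}
    (hp : Module.finrank F p = 1) (hq : Module.finrank F q = 1) (hr : Module.finrank F r = 1)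
    (hpq : p ≠ q) (hpr : p ≠ r) (hro : ¬ r ≤ p ⊔ q) : ¬ q ≤ p ⊔ r := by
  intro h
  have hle : p ⊔ q ≤ p ⊔ r := sup_le le_sup_left h
  have heq : p ⊔ q = p ⊔ r := Submodule.eq_of_le_of_finrank_le hle
    (by rw [AF_sup_pt_rank hp hq hpq, AF_sup_pt_rank hp hr hpr])
  exact hro (heq ▸ le_sup_right)

theorem AF_lineB (hn : 3 ≤ n) {p q r s : Submodule F (Fin n → F)}
    (hp : Module.finrank F p = 1) (hq : Module.finrank F q = 1) (hr : Module.finrank F r = 1)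
    (hs : Module.finrank F s = 1) (hpq : p ≠ q) (hpr : p ≠ r) (hro : ¬ r ≤ p ⊔ q)
    (hson : s ≤ p ⊔ q) (hsp : s ≠ p) : ¬ s ≤ p ⊔ r := by
  intro h
  have hne : p ⊔ q ≠ p ⊔ r := fun he => hro (he ▸ le_sup_right)
  have hm2 : Module.finrank F ↥((p ⊔ q) ⊓ (p ⊔ r)) ≤ 2 := by
    rw [← AF_sup_pt_rank  hp hq hpq]
    exact Submodule.finrank_mono inf_le_left
  have hmne : Module.finrank F ↥((p ⊔ q) ⊓ (p ⊔ r)) ≠ 2 := by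
    intro h2
    have e1 : (p ⊔ q) ⊓ (p ⊔ r) = p ⊔ q := Submodule.eq_of_le_of_finrank_le inf_le_left
      (by rw [AF_sup_pt_rank hp hq hpq, h2])
    have e2 : (p ⊔ q) ⊓ (p ⊔ r) = p ⊔ r := Submodule.eq_of_le_of_finrank_le inf_le_right
      (by rw [AF_sup_pt_rank hp hr hpr, h2])
    exact hne (e1.symm.trans e2)
  have hple : p ≤ (p ⊔ q) ⊓ (p ⊔ r) := le_inf le_sup_left le_sup_left
  have hpeq : p = (p ⊔ q) ⊓ (p ⊔ r) := Submodule.eq_of_le_of_finrank_le hple (by omega)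
  have hsle : s ≤ p := hpeq ▸ le_inf hson h
  exact hsp (Submodule.eq_of_le_of_finrank_le hsle (by omega))

theorem AF_lineA_dual (hn : 3 ≤ n) {H1 H2 H3 : Submodule F (Fin n → F)}
    (h1 : Module.finrank F H1 = n - 1) (h2 : Module.finrank F H2 = n - 1)
    (h3 : Module.finrank F H3 = n - 1) (h12 : H1 ≠ H2) (h13 : H1 ≠ H3)
    (hro : ¬ H1 ⊓ H2 ≤ H3) : ¬ H1 ⊓ H3 ≤ H2 := by
  intro h
  have hle : H1 ⊓ H3 ≤ H1 ⊓ H2 := le_inf inf_le_left h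
  have heq : H1 ⊓ H3 = H1 ⊓ H2 := Submodule.eq_of_le_of_finrank_le hle
    (by rw [AF_inf_hyp_rank h1 h2 h12, AF_inf_hyp_rank h1 h3 h13])
  exact hro (heq ▸ inf_le_right)

theorem AF_lineB_dual (hn : 3 ≤ n) {H1 H2 H3 H4 : Submodule F (Fin n → F)}
    (h1 : Module.finrank F H1 = n - 1) (h2 : Module.finrank F H2 = n - 1)
    (h3 : Module.finrank F H3 = n - 1) (h4 : Module.finrank F H4 = n - 1)
    (h12 : H1 ≠ H2) (h13 : H1 ≠ H3) (h14 : H1 ≠ H4)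
    (hon : H1 ⊓ H2 ≤ H3) (hro : ¬ H1 ⊓ H2 ≤ H4) : ¬ H1 ⊓ H4 ≤ H3 := by
  intro h
  have hS12 : H1 ⊓ H2 ≤ H1 ⊓ H3 := le_inf inf_le_left hon
  have he1 : H1 ⊓ H2 = H1 ⊓ H3 := Submodule.eq_of_le_of_finrank_le hS12
    (by rw [AF_inf_hyp_rank h1 h2 h12, AF_inf_hyp_rank h1 h3 h13])
  have hS14 : H1 ⊓ H4 ≤ H1 ⊓ H2 := he1 ▸ le_inf inf_le_left h
  have he2 : H1 ⊓ H4 = H1 ⊓ H2 := Submodule.eq_of_le_of_finrank_le hS14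
    (by rw [AF_inf_hyp_rank h1 h2 h12, AF_inf_hyp_rank h1 h4 h14])
  exact hro (he2 ▸ inf_le_right)

end Lines

section Gamma45

open Module Submodule

variable {C : Set (AntiFlag F n)} {A1 A2 A3 A4 : AntiFlag F n}

/-- Construction for a pair of points on a line with the two other points off the line,
all four anti-flags sharing the same hyperplane. -/
theorem AF_gamma4_pair (hn : 3 ≤ n) (hF : 4 ≤ Cardinal.mk F) (hC : IsCoclique1 C)
    (hset : C = {A1, A2, A3, A4})
    (d12 : A1 ≠ A2) (d13 : A1 ≠ A3) (d14 : A1 ≠ A4) (d23 : A2 ≠ A3) (d24 : A2 ≠ A4)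
    (d34 : A3 ≠ A4)
    (hH2 : A2.hyp = A1.hyp) (hH3 : A3.hyp = A1.hyp) (hH4 : A4.hyp = A1.hyp)
    (h3 : ¬ A3.pt ≤ A1.pt ⊔ A2.pt) (h4 : ¬ A4.pt ≤ A1.pt ⊔ A2.pt) : ¬ PropL C := by
  obtain ⟨s, hs⟩ := Cardinal.exists_finset_le_card F 4 (by exact_mod_cast hF)
  obtain ⟨v3, hv3, hgen3⟩ := AF_exists_gen A3.pt A3.pt_rank
  obtain ⟨v4, hv4, hgen4⟩ := AF_exists_gen A4.pt A4.pt_rank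
  have hp12 : A1.pt ≠ A2.pt := fun he => d12 (AntiFlag.ext' he hH2.symm)
  have hL2 : Module.finrank F ↥(A1.pt ⊔ A2.pt) = 2 :=
    AF_sup_pt_rank A1.pt_rank A2.pt_rank hp12
  obtain ⟨q, -, hqav⟩ := AF_exists_avoid s [A1.hyp, A1.pt ⊔ A2.pt]
    (le_trans (by norm_num) hs) ⊤ (by
      intro u hu
      simp only [List.mem_cons, List.not_mem_nil, or_false] at hu
      rcases hu with rfl | rfl
      · exact fun hle => AF_hyp_ne_top' hn A1.hyp_rank (top_le_iff.mp hle)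
      · intro hle
        have htop := top_le_iff.mp hle
        rw [htop, finrank_top, Module.finrank_fin_fun] at hL2
        omega)
  have hq1 : q ∉ A1.hyp := hqav _ (by simp)
  have hqL : q ∉ A1.pt ⊔ A2.pt := hqav _ (by simp)
  obtain ⟨K, hK, hPK, hKav⟩ := AF_exists_hyperplane hn s (A1.pt ⊔ A2.pt) [v3, v4, q]
    (le_trans (by norm_num) hs) (by
      intro x hx
      simp only [List.mem_cons, List.not_mem_nil, or_false] at hx
      rcases hx with rfl | rfl | rfl
      · exact fun hmem => h3 (AF_pt_le hgen3 hmem)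
      · exact fun hmem => h4 (AF_pt_le hgen4 hmem)
      · exact hqL) (by simp)
  exact AF_not_propL_mk hn hC hset d12 d13 d14 d23 d24 d34 q K hK (hKav _ (by simp))
    (Or.inr ⟨le_trans le_sup_left hPK, hq1⟩)
    (Or.inr ⟨le_trans le_sup_right hPK, hH2 ▸ hq1⟩)
    (Or.inr ⟨hH3 ▸ hq1, AF_pt_not_le hgen3 (hKav _ (by simp))⟩)
    (Or.inr ⟨hH4 ▸ hq1, AF_pt_not_le hgen4 (hKav _ (by simp))⟩)

/-- Case Γ4: all four anti-flags share the same hyperplane. -/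
theorem AF_gamma4 (hn : 3 ≤ n) (hF : 4 ≤ Cardinal.mk F) (hC : IsCoclique1 C)
    (hset : C = {A1, A2, A3, A4})
    (d12 : A1 ≠ A2) (d13 : A1 ≠ A3) (d14 : A1 ≠ A4) (d23 : A2 ≠ A3) (d24 : A2 ≠ A4)
    (d34 : A3 ≠ A4)
    (hH2 : A2.hyp = A1.hyp) (hH3 : A3.hyp = A1.hyp) (hH4 : A4.hyp = A1.hyp)
    (hnl : ¬ IsLinear C) : ¬ PropL C := by
  have hp12 : A1.pt ≠ A2.pt := fun he => d12 (AntiFlag.ext' he hH2.symm)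
  have hp13 : A1.pt ≠ A3.pt := fun he => d13 (AntiFlag.ext' he hH3.symm)
  have hp14 : A1.pt ≠ A4.pt := fun he => d14 (AntiFlag.ext' he hH4.symm)
  have hp23 : A2.pt ≠ A3.pt := fun he => d23 (AntiFlag.ext' he (hH2.trans hH3.symm))
  have hp24 : A2.pt ≠ A4.pt := fun he => d24 (AntiFlag.ext' he (hH2.trans hH4.symm))
  have hp34 : A3.pt ≠ A4.pt := fun he => d34 (AntiFlag.ext' he (hH3.trans hH4.symm))
  by_cases h3 : A3.pt ≤ A1.pt ⊔ A2.pt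
  · by_cases h4 : A4.pt ≤ A1.pt ⊔ A2.pt
    · exact absurd (⟨⟨A1.hyp, by
        rw [hset]; rintro A hA
        rcases (by simpa using hA : A = A1 ∨ A = A2 ∨ A = A3 ∨ A = A4) with rfl|rfl|rfl|rfl
        · rfl
        · exact hH2
        · exact hH3
        · exact hH4⟩,
        A1.pt ⊔ A2.pt, AF_sup_pt_rank A1.pt_rank A2.pt_rank hp12, by
        rw [hset]; rintro A hA
        rcases (by simpa using hA : A = A1 ∨ A = A2 ∨ A = A3 ∨ A = A4) with rfl|rfl|rfl|rfl
        · exact le_sup_left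
        · exact le_sup_right
        · exact h3
        · exact h4⟩ : IsLinear C) hnl
    · -- A4 off the line A1A2, A3 on it: use the pair (A1, A4)
      have hoff2 : ¬ A2.pt ≤ A1.pt ⊔ A4.pt :=
        AF_lineA hn A1.pt_rank A2.pt_rank A4.pt_rank hp12 hp14 h4
      have hoff3 : ¬ A3.pt ≤ A1.pt ⊔ A4.pt :=
        AF_lineB hn A1.pt_rank A2.pt_rank A4.pt_rank A3.pt_rank hp12 hp14 h4 h3
          (fun he => hp13 he.symm)
      exact AF_gamma4_pair hn hF hC (by
          rw [hset]
          ext x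
          simp only [Set.mem_insert_iff, Set.mem_singleton_iff]
          tauto)
        d14 d12 d13 (Ne.symm d24) (Ne.symm d34) d23 hH4 hH2 hH3 hoff2 hoff3
  · by_cases h4 : A4.pt ≤ A1.pt ⊔ A2.pt
    · -- A3 off the line A1A2, A4 on it: use the pair (A1, A3)
      have hoff2 : ¬ A2.pt ≤ A1.pt ⊔ A3.pt :=
        AF_lineA hn A1.pt_rank A2.pt_rank A3.pt_rank hp12 hp13 h3
      have hoff4 : ¬ A4.pt ≤ A1.pt ⊔ A3.pt :=
        AF_lineB hn A1.pt_rank A2.pt_rank A3.pt_rank A4.pt_rank hp12 hp13 h3 h4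
          (fun he => hp14 he.symm)
      exact AF_gamma4_pair hn hF hC (by
          rw [hset]
          ext x
          simp only [Set.mem_insert_iff, Set.mem_singleton_iff]
          tauto)
        d13 d12 d14 (Ne.symm d23) d34 d24 hH3 hH2 hH4 hoff2 hoff4
    · exact AF_gamma4_pair hn hF hC hset d12 d13 d14 d23 d24 d34 hH2 hH3 hH4 h3 h4

/-- Construction dual to `AF_gamma4_pair`. -/
theorem AF_gamma5_pair (hn : 3 ≤ n) (hF : 4 ≤ Cardinal.mk F) (hC : IsCoclique1 C)
    (hset : C = {A1, A2, A3, A4})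
    (d12 : A1 ≠ A2) (d13 : A1 ≠ A3) (d14 : A1 ≠ A4) (d23 : A2 ≠ A3) (d24 : A2 ≠ A4)
    (d34 : A3 ≠ A4)
    (hp2 : A2.pt = A1.pt) (hp3 : A3.pt = A1.pt) (hp4 : A4.pt = A1.pt)
    (h3 : ¬ A1.hyp ⊓ A2.hyp ≤ A3.hyp) (h4 : ¬ A1.hyp ⊓ A2.hyp ≤ A4.hyp) : ¬ PropL C := by
  obtain ⟨s, hs⟩ := Cardinal.exists_finset_le_card F 4 (by exact_mod_cast hF)
  obtain ⟨v1, hv1, hgen1⟩ := AF_exists_gen A1.pt A1.pt_rank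
  obtain ⟨q, hqS, hqav⟩ := AF_exists_avoid s [A3.hyp, A4.hyp]
    (le_trans (by norm_num) hs) (A1.hyp ⊓ A2.hyp) (by
      intro u hu
      simp only [List.mem_cons, List.not_mem_nil, or_false] at hu
      rcases hu with rfl | rfl
      · exact h3
      · exact h4)
  have hq3 : q ∉ A3.hyp := hqav _ (by simp)
  have hq4 : q ∉ A4.hyp := hqav _ (by simp)
  have hq1 : q ∈ A1.hyp := (inf_le_left : A1.hyp ⊓ A2.hyp ≤ A1.hyp) hqS
  have hq2 : q ∈ A2.hyp := (inf_le_right : A1.hyp ⊓ A2.hyp ≤ A2.hyp) hqS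
  have hq0 : q ≠ 0 := fun h0 => hq3 (h0 ▸ A3.hyp.zero_mem)
  obtain ⟨K, hK, -, hKav⟩ := AF_exists_hyperplane hn s ⊥ [v1, q]
    (le_trans (by norm_num) hs) (by
      intro x hx
      simp only [List.mem_cons, List.not_mem_nil, or_false] at hx
      rcases hx with rfl | rfl
      · simpa using hv1
      · simpa using hq0) (by simp)
  have hqK : q ∉ K := hKav _ (by simp)
  have hv1K : v1 ∉ K := hKav _ (by simp)
  exact AF_not_propL_mk hn hC hset d12 d13 d14 d23 d24 d34 q K hK hqK
    (Or.inl ⟨hq1, AF_pt_not_le hgen1 hv1K⟩)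
    (Or.inl ⟨hq2, AF_pt_not_le (hp2.trans hgen1) hv1K⟩)
    (Or.inr ⟨hq3, AF_pt_not_le (hp3.trans hgen1) hv1K⟩)
    (Or.inr ⟨hq4, AF_pt_not_le (hp4.trans hgen1) hv1K⟩)

end Gamma45

section Gamma5

open Module Submodule

variable {C : Set (AntiFlag F n)} {A1 A2 A3 A4 : AntiFlag F n}

/-- Case Γ5: all four anti-flags share the same point. -/
theorem AF_gamma5 (hn : 3 ≤ n) (hF : 4 ≤ Cardinal.mk F) (hC : IsCoclique1 C)
    (hset : C = {A1, A2, A3, A4})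
    (d12 : A1 ≠ A2) (d13 : A1 ≠ A3) (d14 : A1 ≠ A4) (d23 : A2 ≠ A3) (d24 : A2 ≠ A4)
    (d34 : A3 ≠ A4)
    (hp2 : A2.pt = A1.pt) (hp3 : A3.pt = A1.pt) (hp4 : A4.pt = A1.pt)
    (hnd : ¬ IsDuallyLinear C) : ¬ PropL C := by
  have hH12 : A1.hyp ≠ A2.hyp := fun he => d12 (AntiFlag.ext' hp2.symm he)
  have hH13 : A1.hyp ≠ A3.hyp := fun he => d13 (AntiFlag.ext' hp3.symm he)
  have hH14 : A1.hyp ≠ A4.hyp := fun he => d14 (AntiFlag.ext' hp4.symm he)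
  have hH23 : A2.hyp ≠ A3.hyp := fun he => d23 (AntiFlag.ext' (hp2.trans hp3.symm) he)
  have hH24 : A2.hyp ≠ A4.hyp := fun he => d24 (AntiFlag.ext' (hp2.trans hp4.symm) he)
  have hH34 : A3.hyp ≠ A4.hyp := fun he => d34 (AntiFlag.ext' (hp3.trans hp4.symm) he)
  by_cases h3 : A1.hyp ⊓ A2.hyp ≤ A3.hyp
  · by_cases h4 : A1.hyp ⊓ A2.hyp ≤ A4.hyp
    · refine absurd (⟨⟨A1.pt, by
        rw [hset]; rintro A hA
        rcases (by simpa using hA : A = A1 ∨ A = A2 ∨ A = A3 ∨ A = A4) with rfl|rfl|rfl|rfl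
        · rfl
        · exact hp2
        · exact hp3
        · exact hp4⟩,
        A1.hyp ⊓ A2.hyp, AF_inf_hyp_rank A1.hyp_rank A2.hyp_rank hH12, by
        rw [hset]; rintro A hA
        rcases (by simpa using hA : A = A1 ∨ A = A2 ∨ A = A3 ∨ A = A4) with rfl|rfl|rfl|rfl
        · exact inf_le_left
        · exact inf_le_right
        · exact h3
        · exact h4⟩ : IsDuallyLinear C) hnd
    · have hoff2 : ¬ A1.hyp ⊓ A4.hyp ≤ A2.hyp :=
        AF_lineA_dual hn A1.hyp_rank A2.hyp_rank A4.hyp_rank hH12 hH14 h4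
      have hoff3 : ¬ A1.hyp ⊓ A4.hyp ≤ A3.hyp :=
        AF_lineB_dual hn A1.hyp_rank A2.hyp_rank A3.hyp_rank A4.hyp_rank hH12 hH13 hH14 h3 h4
      exact AF_gamma5_pair hn hF hC (by
          rw [hset]
          ext x
          simp only [Set.mem_insert_iff, Set.mem_singleton_iff]
          tauto)
        d14 d12 d13 (Ne.symm d24) (Ne.symm d34) d23 hp4 hp2 hp3 hoff2 hoff3
  · by_cases h4 : A1.hyp ⊓ A2.hyp ≤ A4.hyp
    · have hoff2 : ¬ A1.hyp ⊓ A3.hyp ≤ A2.hyp :=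
        AF_lineA_dual hn A1.hyp_rank A2.hyp_rank A3.hyp_rank hH12 hH13 h3
      have hoff4 : ¬ A1.hyp ⊓ A3.hyp ≤ A4.hyp :=
        AF_lineB_dual hn A1.hyp_rank A2.hyp_rank A4.hyp_rank A3.hyp_rank hH12 hH14 hH13 h4 h3
      exact AF_gamma5_pair hn hF hC (by
          rw [hset]
          ext x
          simp only [Set.mem_insert_iff, Set.mem_singleton_iff]
          tauto)
        d13 d12 d14 (Ne.symm d23) d34 d24 hp3 hp2 hp4 hoff2 hoff4
    · exact AF_gamma5_pair hn hF hC hset d12 d13 d14 d23 d24 d34 hp2 hp3 hp4 h3 h4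

end Gamma5

section Gamma2

open Module Submodule

variable {C : Set (AntiFlag F n)} {A1 A2 A3 A4 : AntiFlag F n}

theorem AF_q_notin_pt {A : AntiFlag F n} {q : Fin n → F} (hq0 : q ≠ 0) (hqH : q ∈ A.hyp) :
    q ∉ A.pt := by
  intro h
  have hle : Submodule.span F {q} ≤ A.pt := by
    rw [Submodule.span_singleton_le_iff_mem]; exact h
  have heq : Submodule.span F {q} = A.pt := Submodule.eq_of_le_of_finrank_le hle
    (by rw [A.pt_rank, finrank_span_singleton hq0])
  exact A.not_incident (by rw [← heq, Submodule.span_singleton_le_iff_mem]; exact hqH)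

theorem AF_hyp_not_le_line {A : AntiFlag F n} {W : Submodule F (Fin n → F)}
    (hW2 : Module.finrank F W ≤ n - 1) (hptW : A.pt ≤ W) : ¬ A.hyp ≤ W := by
  intro hle
  have heq : A.hyp = W := Submodule.eq_of_le_of_finrank_le hle (by rw [A.hyp_rank]; omega)
  exact A.not_incident (heq ▸ hptW)

/-- Γ2 sub-case: `H1 = H2`, `H3 = H4`, `A3.pt` off the line `A1.pt ⊔ A2.pt`,
`A4.pt` on that line. -/
theorem AF_gamma2_b2 (hn : 3 ≤ n) (hF : 4 ≤ Cardinal.mk F) (hC : IsCoclique1 C)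
    (hset : C = {A1, A2, A3, A4})
    (d12 : A1 ≠ A2) (d13 : A1 ≠ A3) (d14 : A1 ≠ A4) (d23 : A2 ≠ A3) (d24 : A2 ≠ A4)
    (d34 : A3 ≠ A4)
    (hH2 : A2.hyp = A1.hyp) (hH4 : A4.hyp = A3.hyp) (hne : A1.hyp ≠ A3.hyp)
    (h3 : ¬ A3.pt ≤ A1.pt ⊔ A2.pt) (h4 : A4.pt ≤ A1.pt ⊔ A2.pt) : ¬ PropL C := by
  obtain ⟨s, hs⟩ := Cardinal.exists_finset_le_card F 4 (by exact_mod_cast hF)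
  obtain ⟨v1, hv1, hgen1⟩ := AF_exists_gen A1.pt A1.pt_rank
  obtain ⟨v2, hv2, hgen2⟩ := AF_exists_gen A2.pt A2.pt_rank
  obtain ⟨v3, hv3, hgen3⟩ := AF_exists_gen A3.pt A3.pt_rank
  obtain ⟨v4, hv4, hgen4⟩ := AF_exists_gen A4.pt A4.pt_rank
  have hp12 : A1.pt ≠ A2.pt := fun he => d12 (AntiFlag.ext' he hH2.symm)
  have hp13 : A1.pt ≠ A3.pt := fun he => h3 (he ▸ le_sup_left)
  by_cases hc : A4.pt = A1.pt ∨ A4.pt = A2.pt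
  · -- simple construction: S = {1,2}, T = ∅
    obtain ⟨q, hq1, hqav⟩ := AF_exists_avoid s [A3.hyp] (le_trans (by norm_num) hs) A1.hyp
      (by
        intro u hu
        simp only [List.mem_cons, List.not_mem_nil, or_false] at hu
        rcases hu with rfl
        exact AF_not_le_hyp A1.hyp_rank (le_of_eq A3.hyp_rank) hne)
    have hq3 : q ∉ A3.hyp := hqav _ (by simp)
    have hq0 : q ≠ 0 := fun h0 => hq3 (h0 ▸ A3.hyp.zero_mem)
    obtain ⟨K, hK, -, hKav⟩ := AF_exists_hyperplane hn s ⊥ [v1, v2, v3, q]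
      (by simpa using hs) (by
        intro x hx
        simp only [List.mem_cons, List.not_mem_nil, or_false] at hx
        rcases hx with rfl | rfl | rfl | rfl
        · simpa using hv1
        · simpa using hv2
        · simpa using hv3
        · simpa using hq0) (by simp)
    have hv1K : v1 ∉ K := hKav _ (by simp)
    have hv2K : v2 ∉ K := hKav _ (by simp)
    have hv3K : v3 ∉ K := hKav _ (by simp)
    have hnt4 : ¬ A4.pt ≤ K := by
      rcases hc with he | he
      · exact AF_pt_not_le (he.trans hgen1) hv1K
      · exact AF_pt_not_le (he.trans hgen2) hv2K
    exact AF_not_propL_mk hn hC hset d12 d13 d14 d23 d24 d34 q K hK (hKav _ (by simp))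
      (Or.inl ⟨hq1, AF_pt_not_le hgen1 hv1K⟩)
      (Or.inl ⟨hH2 ▸ hq1, AF_pt_not_le hgen2 hv2K⟩)
      (Or.inr ⟨hq3, AF_pt_not_le hgen3 hv3K⟩)
      (Or.inr ⟨hH4 ▸ hq3, hnt4⟩)
  · push_neg at hc
    obtain ⟨hc1, hc2⟩ := hc
    -- pair {1,3} construction: S = {1,2}, T = {1,3}, adjacency {2,3}
    have hoff2 : ¬ A2.pt ≤ A1.pt ⊔ A3.pt :=
      AF_lineA hn A1.pt_rank A2.pt_rank A3.pt_rank hp12 hp13 h3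
    have hoff4 : ¬ A4.pt ≤ A1.pt ⊔ A3.pt :=
      AF_lineB hn A1.pt_rank A2.pt_rank A3.pt_rank A4.pt_rank hp12 hp13 h3 h4 hc1
    obtain ⟨q, hq1, hqav⟩ := AF_exists_avoid s [A3.hyp, A1.pt ⊔ A3.pt]
      (le_trans (by norm_num) hs) A1.hyp (by
        intro u hu
        simp only [List.mem_cons, List.not_mem_nil, or_false] at hu
        rcases hu with rfl | rfl
        · exact AF_not_le_hyp A1.hyp_rank (le_of_eq A3.hyp_rank) hne
        · exact AF_hyp_not_le_line (by
            rw [AF_sup_pt_rank A1.pt_rank A3.pt_rank hp13]; omega) le_sup_left)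
    have hq3 : q ∉ A3.hyp := hqav _ (by simp)
    have hqL : q ∉ A1.pt ⊔ A3.pt := hqav _ (by simp)
    obtain ⟨K, hK, hPK, hKav⟩ := AF_exists_hyperplane hn s (A1.pt ⊔ A3.pt) [v2, v4, q]
      (le_trans (by norm_num) hs) (by
        intro x hx
        simp only [List.mem_cons, List.not_mem_nil, or_false] at hx
        rcases hx with rfl | rfl | rfl
        · exact fun hmem => hoff2 (AF_pt_le hgen2 hmem)
        · exact fun hmem => hoff4 (AF_pt_le hgen4 hmem)
        · exact hqL) (by simp)
    have hv2K : v2 ∉ K := hKav _ (by simp)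
    have hv4K : v4 ∉ K := hKav _ (by simp)
    exact AF_not_propL_mk hn hC (by
        rw [hset]
        ext x
        simp only [Set.mem_insert_iff, Set.mem_singleton_iff]
        tauto)
      d23 (Ne.symm d12) d24 (Ne.symm d13) d34 d14 q K hK (hKav _ (by simp))
      (Or.inl ⟨hH2 ▸ hq1, AF_pt_not_le hgen2 hv2K⟩)
      (Or.inr ⟨le_trans le_sup_right hPK, hq3⟩)
      (Or.inl ⟨hq1, le_trans le_sup_left hPK⟩)
      (Or.inr ⟨hH4 ▸ hq3, AF_pt_not_le hgen4 hv4K⟩)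

/-- Case Γ2: the hyperplanes come in two equal pairs. -/
theorem AF_gamma2 (hn : 3 ≤ n) (hF : 4 ≤ Cardinal.mk F) (hC : IsCoclique1 C)
    (hset : C = {A1, A2, A3, A4})
    (d12 : A1 ≠ A2) (d13 : A1 ≠ A3) (d14 : A1 ≠ A4) (d23 : A2 ≠ A3) (d24 : A2 ≠ A4)
    (d34 : A3 ≠ A4)
    (hH2 : A2.hyp = A1.hyp) (hH4 : A4.hyp = A3.hyp) (hne : A1.hyp ≠ A3.hyp) : ¬ PropL C := by
  obtain ⟨s, hs⟩ := Cardinal.exists_finset_le_card F 4 (by exact_mod_cast hF)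
  obtain ⟨v1, hv1, hgen1⟩ := AF_exists_gen A1.pt A1.pt_rank
  obtain ⟨v2, hv2, hgen2⟩ := AF_exists_gen A2.pt A2.pt_rank
  obtain ⟨v3, hv3, hgen3⟩ := AF_exists_gen A3.pt A3.pt_rank
  obtain ⟨v4, hv4, hgen4⟩ := AF_exists_gen A4.pt A4.pt_rank
  have hp12 : A1.pt ≠ A2.pt := fun he => d12 (AntiFlag.ext' he hH2.symm)
  by_cases h3 : A3.pt ≤ A1.pt ⊔ A2.pt
  · by_cases h4 : A4.pt ≤ A1.pt ⊔ A2.pt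
    · -- all four points on the line `L12` : S = {1,2}, T = all, adjacency {3,4}
      obtain ⟨q, hq1, hqav⟩ := AF_exists_avoid s [A3.hyp, A1.pt ⊔ A2.pt]
        (le_trans (by norm_num) hs) A1.hyp (by
          intro u hu
          simp only [List.mem_cons, List.not_mem_nil, or_false] at hu
          rcases hu with rfl | rfl
          · exact AF_not_le_hyp A1.hyp_rank (le_of_eq A3.hyp_rank) hne
          · exact AF_hyp_not_le_line (by
              rw [AF_sup_pt_rank A1.pt_rank A2.pt_rank hp12]; omega) le_sup_left)
      have hq3 : q ∉ A3.hyp := hqav _ (by simp)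
      have hqL : q ∉ A1.pt ⊔ A2.pt := hqav _ (by simp)
      obtain ⟨K, hK, hPK, hKav⟩ := AF_exists_hyperplane hn s (A1.pt ⊔ A2.pt) [q]
        (le_trans (by norm_num) hs) (by
          intro x hx
          simp only [List.mem_cons, List.not_mem_nil, or_false] at hx
          rcases hx with rfl
          exact hqL) (by simp)
      exact AF_not_propL_mk hn hC (by
          rw [hset]
          ext x
          simp only [Set.mem_insert_iff, Set.mem_singleton_iff]
          tauto)
        d34 (Ne.symm d13) (Ne.symm d23) (Ne.symm d14) (Ne.symm d24) d12
        q K hK (hKav _ (by simp))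
        (Or.inr ⟨le_trans h3 hPK, hq3⟩)
        (Or.inr ⟨le_trans h4 hPK, hH4 ▸ hq3⟩)
        (Or.inl ⟨hq1, le_trans le_sup_left hPK⟩)
        (Or.inl ⟨hH2 ▸ hq1, le_trans le_sup_right hPK⟩)
    · -- A3 on the line, A4 off: swap 3 and 4 and use the b2 lemma
      exact AF_gamma2_b2 hn hF hC (by
          rw [hset]
          ext x
          simp only [Set.mem_insert_iff, Set.mem_singleton_iff]
          tauto)
        d12 d14 d13 d24 d23 (Ne.symm d34) hH2 hH4.symm (hH4 ▸ hne) h4 h3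
  · by_cases h4 : A4.pt ≤ A1.pt ⊔ A2.pt
    · exact AF_gamma2_b2 hn hF hC hset d12 d13 d14 d23 d24 d34 hH2 hH4 hne h3 h4
    · -- both off the line : S = ∅, T = {1,2}, adjacency {1,2}
      obtain ⟨q, -, hqav⟩ := AF_exists_avoid s [A1.hyp, A3.hyp, A1.pt ⊔ A2.pt]
        (le_trans (by norm_num) hs) ⊤ (by
          intro u hu
          simp only [List.mem_cons, List.not_mem_nil, or_false] at hu
          rcases hu with rfl | rfl | rfl
          · exact fun hle => AF_hyp_ne_top' hn A1.hyp_rank (top_le_iff.mp hle)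
          · exact fun hle => AF_hyp_ne_top' hn A3.hyp_rank (top_le_iff.mp hle)
          · intro hle
            have htop := top_le_iff.mp hle
            have hL2 : Module.finrank F ↥(A1.pt ⊔ A2.pt) = 2 :=
              AF_sup_pt_rank A1.pt_rank A2.pt_rank hp12
            rw [htop, finrank_top, Module.finrank_fin_fun] at hL2
            omega)
      have hq1 : q ∉ A1.hyp := hqav _ (by simp)
      have hq3 : q ∉ A3.hyp := hqav _ (by simp)
      have hqL : q ∉ A1.pt ⊔ A2.pt := hqav _ (by simp)
      obtain ⟨K, hK, hPK, hKav⟩ := AF_exists_hyperplane hn s (A1.pt ⊔ A2.pt) [v3, v4, q]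
        (le_trans (by norm_num) hs) (by
          intro x hx
          simp only [List.mem_cons, List.not_mem_nil, or_false] at hx
          rcases hx with rfl | rfl | rfl
          · exact fun hmem => h3 (AF_pt_le hgen3 hmem)
          · exact fun hmem => h4 (AF_pt_le hgen4 hmem)
          · exact hqL) (by simp)
      exact AF_not_propL_mk hn hC hset d12 d13 d14 d23 d24 d34 q K hK (hKav _ (by simp))
        (Or.inr ⟨le_trans le_sup_left hPK, hq1⟩)
        (Or.inr ⟨le_trans le_sup_right hPK, hH2 ▸ hq1⟩)
        (Or.inr ⟨hq3, AF_pt_not_le hgen3 (hKav _ (by simp))⟩)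
        (Or.inr ⟨hH4 ▸ hq3, AF_pt_not_le hgen4 (hKav _ (by simp))⟩)

end Gamma2

section Gamma3

open Module Submodule

variable {C : Set (AntiFlag F n)} {A1 A2 A3 A4 : AntiFlag F n}

/-- Γ3 sub-case: `p1 = p2`, `p3 = p4`, `S12 ⊄ H3`, `S12 ≤ H4`. -/
theorem AF_gamma3_b2 (hn : 3 ≤ n) (hF : 4 ≤ Cardinal.mk F) (hC : IsCoclique1 C)
    (hset : C = {A1, A2, A3, A4})
    (d12 : A1 ≠ A2) (d13 : A1 ≠ A3) (d14 : A1 ≠ A4) (d23 : A2 ≠ A3) (d24 : A2 ≠ A4)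
    (d34 : A3 ≠ A4)
    (hp2 : A2.pt = A1.pt) (hp4 : A4.pt = A3.pt) (hpne : A1.pt ≠ A3.pt)
    (h3 : ¬ A1.hyp ⊓ A2.hyp ≤ A3.hyp) (h4 : A1.hyp ⊓ A2.hyp ≤ A4.hyp) : ¬ PropL C := by
  obtain ⟨s, hs⟩ := Cardinal.exists_finset_le_card F 4 (by exact_mod_cast hF)
  obtain ⟨v3, hv3, hgen3⟩ := AF_exists_gen A3.pt A3.pt_rank
  have hH12 : A1.hyp ≠ A2.hyp := fun he => d12 (AntiFlag.ext' hp2.symm he)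
  have hH13 : A1.hyp ≠ A3.hyp := fun he => h3 (he ▸ inf_le_left)
  have hv3p1 : v3 ∉ A1.pt := AF_notmem_of_ne A1.pt A3.pt A1.pt_rank A3.pt_rank hpne hv3 hgen3
  by_cases hc : A4.hyp = A1.hyp ∨ A4.hyp = A2.hyp
  · -- simple construction: S = ∅, T = {1,2}
    obtain ⟨q, -, hqav⟩ := AF_exists_avoid s [A1.hyp, A2.hyp, A3.hyp, A1.pt]
      (by simpa using hs) ⊤ (by
        intro u hu
        simp only [List.mem_cons, List.not_mem_nil, or_false] at hu
        rcases hu with rfl | rfl | rfl | rfl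
        · exact fun hle => AF_hyp_ne_top' hn A1.hyp_rank (top_le_iff.mp hle)
        · exact fun hle => AF_hyp_ne_top' hn A2.hyp_rank (top_le_iff.mp hle)
        · exact fun hle => AF_hyp_ne_top' hn A3.hyp_rank (top_le_iff.mp hle)
        · intro hle
          have htop := top_le_iff.mp hle
          have := A1.pt_rank
          rw [htop, finrank_top, Module.finrank_fin_fun] at this
          omega)
    have hq1 : q ∉ A1.hyp := hqav _ (by simp)
    have hq2 : q ∉ A2.hyp := hqav _ (by simp)
    have hq3 : q ∉ A3.hyp := hqav _ (by simp)
    have hqp1 : q ∉ A1.pt := hqav _ (by simp)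
    have hq4 : q ∉ A4.hyp := by
      rcases hc with he | he
      · exact he ▸ hq1
      · exact he ▸ hq2
    obtain ⟨K, hK, hPK, hKav⟩ := AF_exists_hyperplane hn s A1.pt [v3, q]
      (le_trans (by norm_num) hs) (by
        intro x hx
        simp only [List.mem_cons, List.not_mem_nil, or_false] at hx
        rcases hx with rfl | rfl
        · exact hv3p1
        · exact hqp1) (by simp)
    have hv3K : v3 ∉ K := hKav _ (by simp)
    exact AF_not_propL_mk hn hC hset d12 d13 d14 d23 d24 d34 q K hK (hKav _ (by simp))
      (Or.inr ⟨hPK, hq1⟩)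
      (Or.inr ⟨hp2 ▸ hPK, hq2⟩)
      (Or.inr ⟨hq3, AF_pt_not_le hgen3 hv3K⟩)
      (Or.inr ⟨hq4, AF_pt_not_le (hp4.trans hgen3) hv3K⟩)
  · push_neg at hc
    obtain ⟨hc1, hc2⟩ := hc
    -- pencil pair {1,3} : S = {1,3}, T = {1,2}, adjacency {2,3}
    have hoff2 : ¬ A1.hyp ⊓ A3.hyp ≤ A2.hyp :=
      AF_lineA_dual hn A1.hyp_rank A2.hyp_rank A3.hyp_rank hH12 hH13 h3
    have hoff4 : ¬ A1.hyp ⊓ A3.hyp ≤ A4.hyp :=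
      AF_lineB_dual hn A1.hyp_rank A2.hyp_rank A4.hyp_rank A3.hyp_rank hH12
        (Ne.symm hc1) hH13 h4 h3
    obtain ⟨q, hqS, hqav⟩ := AF_exists_avoid s [A2.hyp, A4.hyp]
      (le_trans (by norm_num) hs) (A1.hyp ⊓ A3.hyp) (by
        intro u hu
        simp only [List.mem_cons, List.not_mem_nil, or_false] at hu
        rcases hu with rfl | rfl
        · exact hoff2
        · exact hoff4)
    have hq2 : q ∉ A2.hyp := hqav _ (by simp)
    have hq4 : q ∉ A4.hyp := hqav _ (by simp)
    have hq1 : q ∈ A1.hyp := (inf_le_left : A1.hyp ⊓ A3.hyp ≤ A1.hyp) hqS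
    have hq3 : q ∈ A3.hyp := (inf_le_right : A1.hyp ⊓ A3.hyp ≤ A3.hyp) hqS
    have hq0 : q ≠ 0 := fun h0 => hq2 (h0 ▸ A2.hyp.zero_mem)
    have hqp1 : q ∉ A1.pt := AF_q_notin_pt hq0 hq1
    obtain ⟨K, hK, hPK, hKav⟩ := AF_exists_hyperplane hn s A1.pt [v3, q]
      (le_trans (by norm_num) hs) (by
        intro x hx
        simp only [List.mem_cons, List.not_mem_nil, or_false] at hx
        rcases hx with rfl | rfl
        · exact hv3p1
        · exact hqp1) (by simp)
    have hv3K : v3 ∉ K := hKav _ (by simp)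
    exact AF_not_propL_mk hn hC (by
        rw [hset]
        ext x
        simp only [Set.mem_insert_iff, Set.mem_singleton_iff]
        tauto)
      d23 (Ne.symm d12) d24 (Ne.symm d13) d34 d14 q K hK (hKav _ (by simp))
      (Or.inr ⟨hp2 ▸ hPK, hq2⟩)
      (Or.inl ⟨hq3, AF_pt_not_le hgen3 hv3K⟩)
      (Or.inl ⟨hq1, hPK⟩)
      (Or.inr ⟨hq4, AF_pt_not_le (hp4.trans hgen3) hv3K⟩)

/-- Case Γ3: the points come in two equal pairs. -/
theorem AF_gamma3 (hn : 3 ≤ n) (hF : 4 ≤ Cardinal.mk F) (hC : IsCoclique1 C)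
    (hset : C = {A1, A2, A3, A4})
    (d12 : A1 ≠ A2) (d13 : A1 ≠ A3) (d14 : A1 ≠ A4) (d23 : A2 ≠ A3) (d24 : A2 ≠ A4)
    (d34 : A3 ≠ A4)
    (hp2 : A2.pt = A1.pt) (hp4 : A4.pt = A3.pt) (hpne : A1.pt ≠ A3.pt) : ¬ PropL C := by
  obtain ⟨s, hs⟩ := Cardinal.exists_finset_le_card F 4 (by exact_mod_cast hF)
  obtain ⟨v1, hv1, hgen1⟩ := AF_exists_gen A1.pt A1.pt_rank
  obtain ⟨v3, hv3, hgen3⟩ := AF_exists_gen A3.pt A3.pt_rank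
  have hH12 : A1.hyp ≠ A2.hyp := fun he => d12 (AntiFlag.ext' hp2.symm he)
  have hv3p1 : v3 ∉ A1.pt := AF_notmem_of_ne A1.pt A3.pt A1.pt_rank A3.pt_rank hpne hv3 hgen3
  by_cases h3 : A1.hyp ⊓ A2.hyp ≤ A3.hyp
  · by_cases h4 : A1.hyp ⊓ A2.hyp ≤ A4.hyp
    · -- S = all, T = {1,2}, adjacency {3,4}
      have hSrank : Module.finrank F ↥(A1.hyp ⊓ A2.hyp) = n - 2 :=
        AF_inf_hyp_rank A1.hyp_rank A2.hyp_rank hH12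
      obtain ⟨q, hqS, hqav⟩ := AF_exists_avoid s [(⊥ : Submodule F (Fin n → F))]
        (le_trans (by norm_num) hs) (A1.hyp ⊓ A2.hyp) (by
          intro u hu
          simp only [List.mem_cons, List.not_mem_nil, or_false] at hu
          rcases hu with rfl
          intro hle
          rw [le_bot_iff.mp hle] at hSrank
          rw [finrank_bot] at hSrank
          omega)
      have hq0 : q ≠ 0 := by simpa using hqav ⊥ (by simp)
      have hq1 : q ∈ A1.hyp := (inf_le_left : A1.hyp ⊓ A2.hyp ≤ A1.hyp) hqS
      have hq2 : q ∈ A2.hyp := (inf_le_right : A1.hyp ⊓ A2.hyp ≤ A2.hyp) hqS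
      have hq3 : q ∈ A3.hyp := h3 hqS
      have hq4 : q ∈ A4.hyp := h4 hqS
      have hqp1 : q ∉ A1.pt := AF_q_notin_pt hq0 hq1
      obtain ⟨K, hK, hPK, hKav⟩ := AF_exists_hyperplane hn s A1.pt [v3, q]
        (le_trans (by norm_num) hs) (by
          intro x hx
          simp only [List.mem_cons, List.not_mem_nil, or_false] at hx
          rcases hx with rfl | rfl
          · exact hv3p1
          · exact hqp1) (by simp)
      have hv3K : v3 ∉ K := hKav _ (by simp)
      exact AF_not_propL_mk hn hC (by
          rw [hset]
          ext x
          simp only [Set.mem_insert_iff, Set.mem_singleton_iff]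
          tauto)
        d34 (Ne.symm d13) (Ne.symm d23) (Ne.symm d14) (Ne.symm d24) d12
        q K hK (hKav _ (by simp))
        (Or.inl ⟨hq3, AF_pt_not_le hgen3 hv3K⟩)
        (Or.inl ⟨hq4, AF_pt_not_le (hp4.trans hgen3) hv3K⟩)
        (Or.inl ⟨hq1, hPK⟩)
        (Or.inl ⟨hq2, hp2 ▸ hPK⟩)
    · -- S12 ≤ H3 but not H4 : swap 3 and 4
      exact AF_gamma3_b2 hn hF hC (by
          rw [hset]
          ext x
          simp only [Set.mem_insert_iff, Set.mem_singleton_iff]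
          tauto)
        d12 d14 d13 d24 d23 (Ne.symm d34) hp2 hp4.symm (hp4 ▸ hpne) h4 h3
  · by_cases h4 : A1.hyp ⊓ A2.hyp ≤ A4.hyp
    · exact AF_gamma3_b2 hn hF hC hset d12 d13 d14 d23 d24 d34 hp2 hp4 hpne h3 h4
    · -- S = {1,2}, T = ∅, adjacency {1,2}
      obtain ⟨q, hqS, hqav⟩ := AF_exists_avoid s [A3.hyp, A4.hyp]
        (le_trans (by norm_num) hs) (A1.hyp ⊓ A2.hyp) (by
          intro u hu
          simp only [List.mem_cons, List.not_mem_nil, or_false] at hu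
          rcases hu with rfl | rfl
          · exact h3
          · exact h4)
      have hq3 : q ∉ A3.hyp := hqav _ (by simp)
      have hq4 : q ∉ A4.hyp := hqav _ (by simp)
      have hq1 : q ∈ A1.hyp := (inf_le_left : A1.hyp ⊓ A2.hyp ≤ A1.hyp) hqS
      have hq2 : q ∈ A2.hyp := (inf_le_right : A1.hyp ⊓ A2.hyp ≤ A2.hyp) hqS
      have hq0 : q ≠ 0 := fun h0 => hq3 (h0 ▸ A3.hyp.zero_mem)
      obtain ⟨K, hK, -, hKav⟩ := AF_exists_hyperplane hn s ⊥ [v1, v3, q]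
        (le_trans (by norm_num) hs) (by
          intro x hx
          simp only [List.mem_cons, List.not_mem_nil, or_false] at hx
          rcases hx with rfl | rfl | rfl
          · simpa using hv1
          · simpa using hv3
          · simpa using hq0) (by simp)
      have hv1K : v1 ∉ K := hKav _ (by simp)
      have hv3K : v3 ∉ K := hKav _ (by simp)
      exact AF_not_propL_mk hn hC hset d12 d13 d14 d23 d24 d34 q K hK (hKav _ (by simp))
        (Or.inl ⟨hq1, AF_pt_not_le hgen1 hv1K⟩)
        (Or.inl ⟨hq2, AF_pt_not_le (hp2.trans hgen1) hv1K⟩)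
        (Or.inr ⟨hq3, AF_pt_not_le hgen3 hv3K⟩)
        (Or.inr ⟨hq4, AF_pt_not_le (hp4.trans hgen3) hv3K⟩)

end Gamma3

section Mixed

open Module Submodule

variable {C : Set (AntiFlag F n)} {A1 A2 A3 A4 : AntiFlag F n}

set_option maxHeartbeats 1000000 in
/-- Routing case: `H1 = H2` but not all hyperplanes are equal. -/
theorem AF_mixed (hn : 3 ≤ n) (hF : 4 ≤ Cardinal.mk F) (hC : IsCoclique1 C)
    (hset : C = {A1, A2, A3, A4})
    (d12 : A1 ≠ A2) (d13 : A1 ≠ A3) (d14 : A1 ≠ A4) (d23 : A2 ≠ A3) (d24 : A2 ≠ A4)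
    (d34 : A3 ≠ A4)
    (hH2 : A2.hyp = A1.hyp) (hnall : ¬ (A3.hyp = A1.hyp ∧ A4.hyp = A1.hyp)) : ¬ PropL C := by
  have hp12 : A1.pt ≠ A2.pt := fun he => d12 (AntiFlag.ext' he hH2.symm)
  by_cases h34 : A3.hyp = A4.hyp
  · have hne : A1.hyp ≠ A3.hyp := fun he => hnall ⟨he.symm, h34 ▸ he.symm⟩
    exact AF_gamma2 hn hF hC hset d12 d13 d14 d23 d24 d34 hH2 h34.symm hne
  · by_cases h31 : A3.hyp = A1.hyp
    · -- hyperplane block {1,2,3}, A4 has the unique hyperplane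
      have h41 : A4.hyp ≠ A1.hyp := fun he => h34 (h31.trans he.symm)
      have hp13 : A1.pt ≠ A3.pt := fun he => d13 (AntiFlag.ext' he h31.symm)
      have hp23 : A2.pt ≠ A3.pt := fun he => d23 (AntiFlag.ext' he (hH2.trans h31.symm))
      by_cases hp41 : A4.pt = A1.pt
      · exact AF_gamma1 hn hF hC (by
            rw [hset]; ext x; simp only [Set.mem_insert_iff, Set.mem_singleton_iff]; tauto)
          d24 (Ne.symm d12) d23 (Ne.symm d14) (Ne.symm d34) d13
          (fun he => hp12 (he.trans hp41).symm) (Ne.symm hp12) hp23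
          (fun he => h41 (he.trans hH2)) h41 (fun he => h41 (he.trans h31))
      · exact AF_gamma1 hn hF hC (by
            rw [hset]; ext x; simp only [Set.mem_insert_iff, Set.mem_singleton_iff]; tauto)
          d14 d12 d13 (Ne.symm d24) (Ne.symm d34) d23
          (fun he => hp41 he.symm) hp12 hp13
          h41 (fun he => h41 (he.trans hH2)) (fun he => h41 (he.trans h31))
    · by_cases h41 : A4.hyp = A1.hyp
      · -- hyperplane block {1,2,4}, A3 has the unique hyperplane
        have hp14 : A1.pt ≠ A4.pt := fun he => d14 (AntiFlag.ext' he h41.symm)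
        have hp24 : A2.pt ≠ A4.pt := fun he => d24 (AntiFlag.ext' he (hH2.trans h41.symm))
        by_cases hp31 : A3.pt = A1.pt
        · exact AF_gamma1 hn hF hC (by
              rw [hset]; ext x; simp only [Set.mem_insert_iff, Set.mem_singleton_iff]; tauto)
            d23 (Ne.symm d12) d24 (Ne.symm d13) d34 d14
            (fun he => hp12 (he.trans hp31).symm) (Ne.symm hp12) hp24
            (fun he => h31 (he.trans hH2)) h31 (fun he => h31 (he.trans h41))
        · exact AF_gamma1 hn hF hC (by
              rw [hset]; ext x; simp only [Set.mem_insert_iff, Set.mem_singleton_iff]; tauto)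
            d13 d12 d14 (Ne.symm d23) d34 d24
            (fun he => hp31 he.symm) hp12 hp14
            h31 (fun he => h31 (he.trans hH2)) (fun he => h31 (he.trans h41))
      · -- A3.hyp and A4.hyp are both unique hyperplanes
        by_cases hp34 : A3.pt = A4.pt
        · by_cases hp31 : A3.pt = A1.pt
          · -- p2 unique
            exact AF_gamma1 hn hF hC (by
                rw [hset]; ext x; simp only [Set.mem_insert_iff, Set.mem_singleton_iff]; tauto)
              d23 (Ne.symm d12) d24 (Ne.symm d13) d34 d14
              (fun he => hp12 (he.trans hp31).symm) (Ne.symm hp12)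
              (fun he => hp12 ((he.trans hp34.symm).trans hp31).symm)
              (fun he => h31 (he.trans hH2)) h31 h34
          · -- p1 unique
            exact AF_gamma1 hn hF hC (by
                rw [hset]; ext x; simp only [Set.mem_insert_iff, Set.mem_singleton_iff]; tauto)
              d13 d12 d14 (Ne.symm d23) d34 d24
              (fun he => hp31 he.symm) hp12
              (fun he => hp31 (hp34.trans he.symm))
              h31 (fun he => h31 (he.trans hH2)) h34
        · by_cases hp31 : A3.pt = A1.pt
          · by_cases hp42 : A4.pt = A2.pt
            · exact AF_gamma3 hn hF hC (by
                  rw [hset]; ext x; simp only [Set.mem_insert_iff, Set.mem_singleton_iff]; tauto)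
                d13 d12 d14 (Ne.symm d23) d34 d24
                hp31 hp42 hp12
            · -- p4 unique
              exact AF_gamma1 hn hF hC (by
                  rw [hset]; ext x; simp only [Set.mem_insert_iff, Set.mem_singleton_iff]; tauto)
                (Ne.symm d34) (Ne.symm d14) (Ne.symm d24) (Ne.symm d13) (Ne.symm d23) d12
                (fun he => hp34 he.symm)
                (fun he => hp34 (he.trans hp31.symm).symm)
                hp42
                h34 h31 (fun he => h31 (he.trans hH2))
          · by_cases hp32 : A3.pt = A2.pt
            · by_cases hp41 : A4.pt = A1.pt
              · exact AF_gamma3 hn hF hC (by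
                    rw [hset]; ext x; simp only [Set.mem_insert_iff, Set.mem_singleton_iff]; tauto)
                  d14 d12 d13 (Ne.symm d24) (Ne.symm d34) d23
                  hp41 hp32 hp12
              · -- p4 unique
                exact AF_gamma1 hn hF hC (by
                    rw [hset]; ext x; simp only [Set.mem_insert_iff, Set.mem_singleton_iff]; tauto)
                  (Ne.symm d34) (Ne.symm d14) (Ne.symm d24) (Ne.symm d13) (Ne.symm d23) d12
                  (fun he => hp34 he.symm)
                  hp41
                  (fun he => hp34 (he.trans hp32.symm).symm)
                  h34 h31 (fun he => h31 (he.trans hH2))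
            · -- p3 unique
              exact AF_gamma1 hn hF hC (by
                  rw [hset]; ext x; simp only [Set.mem_insert_iff, Set.mem_singleton_iff]; tauto)
                d34 (Ne.symm d13) (Ne.symm d23) (Ne.symm d14) (Ne.symm d24) d12
                hp34 hp31 hp32
                (Ne.symm h34) h41 (fun he => h41 (he.trans hH2))

end Mixed

section AllDistinct

open Module Submodule

variable {C : Set (AntiFlag F n)} {A1 A2 A3 A4 : AntiFlag F n}

set_option maxHeartbeats 1000000 in
/-- Routing case: all four hyperplanes are pairwise distinct. -/
theorem AF_alldistinct (hn : 3 ≤ n) (hF : 4 ≤ Cardinal.mk F) (hC : IsCoclique1 C)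
    (hset : C = {A1, A2, A3, A4})
    (d12 : A1 ≠ A2) (d13 : A1 ≠ A3) (d14 : A1 ≠ A4) (d23 : A2 ≠ A3) (d24 : A2 ≠ A4)
    (d34 : A3 ≠ A4)
    (hne12 : A1.hyp ≠ A2.hyp) (hne13 : A1.hyp ≠ A3.hyp) (hne14 : A1.hyp ≠ A4.hyp)
    (hne23 : A2.hyp ≠ A3.hyp) (hne24 : A2.hyp ≠ A4.hyp) (hne34 : A3.hyp ≠ A4.hyp)
    (hnd : ¬ IsDuallyLinear C) : ¬ PropL C := by
  by_cases hp12 : A1.pt = A2.pt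
  · by_cases hp34 : A3.pt = A4.pt
    · by_cases hp13 : A1.pt = A3.pt
      · -- all points equal
        exact AF_gamma5 hn hF hC hset d12 d13 d14 d23 d24 d34
          hp12.symm hp13.symm (hp34.symm.trans hp13.symm) hnd
      · exact AF_gamma3 hn hF hC hset d12 d13 d14 d23 d24 d34 hp12.symm hp34.symm hp13
    · by_cases hp31 : A3.pt = A1.pt
      · -- p4 unique
        exact AF_gamma1 hn hF hC (by
            rw [hset]; ext x; simp only [Set.mem_insert_iff, Set.mem_singleton_iff]; tauto)
          (Ne.symm d14) (Ne.symm d24) (Ne.symm d34) d12 d13 d23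
          (fun he => hp34 (hp31.trans he.symm))
          (fun he => hp34 (hp31.trans (he.trans hp12.symm).symm))
          (fun he => hp34 he.symm)
          hne14 hne12 hne13
      · -- p3 unique
        exact AF_gamma1 hn hF hC (by
            rw [hset]; ext x; simp only [Set.mem_insert_iff, Set.mem_singleton_iff]; tauto)
          (Ne.symm d13) (Ne.symm d23) d34 d12 d14 d24
          hp31 (fun he => hp31 (he.trans hp12.symm)) hp34
          hne13 hne12 hne14
  · by_cases hp13 : A1.pt = A3.pt
    · by_cases hp24 : A2.pt = A4.pt
      · exact AF_gamma3 hn hF hC (by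
            rw [hset]; ext x; simp only [Set.mem_insert_iff, Set.mem_singleton_iff]; tauto)
          d13 d12 d14 (Ne.symm d23) d34 d24
          hp13.symm hp24.symm hp12
      · by_cases hp14 : A1.pt = A4.pt
        · -- p2 unique
          exact AF_gamma1 hn hF hC (by
              rw [hset]; ext x; simp only [Set.mem_insert_iff, Set.mem_singleton_iff]; tauto)
            (Ne.symm d12) d23 d24 d13 d14 d34
            (fun he => hp12 he.symm)
            (fun he => hp12 (he.trans hp13.symm).symm)
            (fun he => hp12 (he.trans hp14.symm).symm)
            hne12 hne13 hne14
        · -- p4 unique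
          exact AF_gamma1 hn hF hC (by
              rw [hset]; ext x; simp only [Set.mem_insert_iff, Set.mem_singleton_iff]; tauto)
            (Ne.symm d14) (Ne.symm d24) (Ne.symm d34) d12 d13 d23
            (fun he => hp14 he.symm)
            (fun he => hp24 he.symm)
            (fun he => hp14 (he.trans hp13.symm).symm)
            hne14 hne12 hne13
    · by_cases hp14 : A1.pt = A4.pt
      · by_cases hp23 : A2.pt = A3.pt
        · exact AF_gamma3 hn hF hC (by
              rw [hset]; ext x; simp only [Set.mem_insert_iff, Set.mem_singleton_iff]; tauto)
            d14 d12 d13 (Ne.symm d24) (Ne.symm d34) d23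
            hp14.symm hp23.symm hp12
        · -- p2 unique
          exact AF_gamma1 hn hF hC (by
              rw [hset]; ext x; simp only [Set.mem_insert_iff, Set.mem_singleton_iff]; tauto)
            (Ne.symm d12) d23 d24 d13 d14 d34
            (fun he => hp12 he.symm)
            hp23
            (fun he => hp12 (he.trans hp14.symm).symm)
            hne12 hne13 hne14
      · -- p1 unique
        exact AF_gamma1 hn hF hC hset d12 d13 d14 d23 d24 d34
          hp12 hp13 hp14 (Ne.symm hne12) hne23 hne24

end AllDistinct
set_option maxHeartbeats 1000000 in
theorem stmt11 (hn : 3 ≤ n) (hF : 4 ≤ Cardinal.mk F)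
    (C : Set (AntiFlag F n)) (hC : IsCoclique1 C) (hcard : C.ncard = 4) :
    (IsLinear C ∨ IsDuallyLinear C) ↔ PropL C := by
  constructor
  · rintro (hlin | hdlin)
    · exact AF_propL_of_linear hn hlin
    · exact AF_propL_of_dually_linear hn hdlin
  · intro hPL
    by_contra hno
    push_neg at hno
    obtain ⟨hnl, hnd⟩ := hno
    obtain ⟨A1, A2, A3, A4, d12, d13, d14, d23, d24, d34, hset⟩ := AF_set_ncard_eq_four hcard
    by_cases hh2 : A2.hyp = A1.hyp
    · by_cases hh3 : A3.hyp = A1.hyp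
      · by_cases hh4 : A4.hyp = A1.hyp
        · exact AF_gamma4 hn hF hC hset d12 d13 d14 d23 d24 d34 hh2 hh3 hh4 hnl hPL
        · exact AF_mixed hn hF hC hset d12 d13 d14 d23 d24 d34 hh2 (fun h => hh4 h.2) hPL
      · exact AF_mixed hn hF hC hset d12 d13 d14 d23 d24 d34 hh2 (fun h => hh3 h.1) hPL
    · by_cases hh13 : A3.hyp = A1.hyp
      · exact AF_mixed hn hF hC (by
            rw [hset]; ext x; simp only [Set.mem_insert_iff, Set.mem_singleton_iff]; tauto)
          d13 d12 d14 (Ne.symm d23) d34 d24 hh13 (fun h => hh2 h.1) hPL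
      · by_cases hh14 : A4.hyp = A1.hyp
        · exact AF_mixed hn hF hC (by
              rw [hset]; ext x; simp only [Set.mem_insert_iff, Set.mem_singleton_iff]; tauto)
            d14 d12 d13 (Ne.symm d24) (Ne.symm d34) d23 hh14 (fun h => hh2 h.1) hPL
        · by_cases hh23 : A3.hyp = A2.hyp
          · exact AF_mixed hn hF hC (by
                rw [hset]; ext x; simp only [Set.mem_insert_iff, Set.mem_singleton_iff]; tauto)
              d23 (Ne.symm d12) d24 (Ne.symm d13) d34 d14 hh23 (fun h => hh2 h.1.symm) hPL
          · by_cases hh24 : A4.hyp = A2.hyp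
            · exact AF_mixed hn hF hC (by
                  rw [hset]; ext x; simp only [Set.mem_insert_iff, Set.mem_singleton_iff]; tauto)
                d24 (Ne.symm d12) d23 (Ne.symm d14) (Ne.symm d34) d13 hh24
                (fun h => hh2 h.1.symm) hPL
            · by_cases hh34 : A4.hyp = A3.hyp
              · exact AF_mixed hn hF hC (by
                    rw [hset]; ext x; simp only [Set.mem_insert_iff, Set.mem_singleton_iff]; tauto)
                  d34 (Ne.symm d13) (Ne.symm d23) (Ne.symm d14) (Ne.symm d24) d12 hh34
                  (fun h => hh13 h.1.symm) hPL
              · exact AF_alldistinct hn hF hC hset d12 d13 d14 d23 d24 d34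
                  (fun he => hh2 he.symm) (fun he => hh13 he.symm) (fun he => hh14 he.symm)
                  (fun he => hh23 he.symm) (fun he => hh24 he.symm) (fun he => hh34 he.symm)
                  hnd hPL
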